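/- Let (v, P) be a helical solution pair of the incompressible Euler equations ∂ₜv + (v·∇)v = −∇P, div v = 0 on Ω × (0,T) with v·n = 0 on ∂Ω, where Ω ⊆ ℝ³ is a helical domain with simply-connected bounded smooth cross-section D = {(x₁,x₂) : (x₁,x₂,0) ∈ Ω}, v is C² and P is C¹. Let w₃ be the third component of the vorticity ∇×v, let v_ξ = v·ξ be the helical swirl, and set v(x₁,x₂,t) = v_ξ(x₁,x₂,0,t) and w(x₁,x₂,t) = w₃(x₁,x₂,0,t) for (x₁,x₂) ∈ D. Let φ(·,t) be the stream function of the orthogonal part u = v − v_ξ ξ/|ξ|² on D (φ = 0 on ∂D, (u₁,u₂)(x₁,x₂,0,t) = |ξ|⁻² ((−x₁x₂, h²+x₁²), (−(h²+x₂²), x₁x₂)) ∇φ(x₁,x₂,t)). Then on D × (0,T): (i) ∂ₜv + ∇⊥φ·∇v = 0; (ii) ∂ₜw + ∇⊥φ·∇w = ∂_{x₁}v ∂_{x₂}((x₁∂_{x₁}φ + x₂∂_{x₂}φ)/|ξ|²) − ∂_{x₂}v ∂_{x₁}((x₁∂_{x₁}φ + x₂∂_{x₂}φ)/|ξ|²)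 + 2v(x₂∂_{x₁}v − x₁∂_{x₂}v)/|ξ|⁴; and (iii) L_K φ = w + 2h²v/|ξ|⁴ + (x₁∂_{x₁}v + x₂∂_{x₂}v)/|ξ|², where ∇⊥φ = (∂_{x₂}φ, −∂_{x₁}φ) and |ξ|² = h² + x₁² + x₂². -/

import Mathlib

noncomputable section

open Real

/-- ℝ³ as functions `Fin 3 → ℝ`. -/
abbrev V3 := Fin 3 → ℝ

/-- ℝ² as functions `Fin 2 → ℝ`. -/
abbrev V2 := Fin 2 → ℝ

/-- Partial derivative `∂_{x_i} f` of a scalar function on ℝ³. -/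
def pd3 (i : Fin 3) (f : V3 → ℝ) (x : V3) : ℝ := fderiv ℝ f x (Pi.single i 1)

/-- Partial derivative `∂_{x_i} f` of a scalar function on ℝ². -/
def pd2 (i : Fin 2) (f : V2 → ℝ) (x : V2) : ℝ := fderiv ℝ f x (Pi.single i 1)

/-- Embedding of the cross-section plane: `(x₁,x₂) ↦ (x₁,x₂,0)`. -/
def emb (p : V2) : V3 := ![p 0, p 1, 0]

/-- The helical transformation `H_θ(x) = Q_θ x + (0,0,hθ)`. -/
def Hmap (h θ : ℝ) (x : V3) : V3 :=
  ![x 0 * Real.cos θ + x 1 * Real.sin θ,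
    -(x 0) * Real.sin θ + x 1 * Real.cos θ,
    x 2 + h * θ]

/-- The rotation `Q_θ = diag(R_θ, 1)` acting on vectors of ℝ³. -/
def Qrot (θ : ℝ) (v : V3) : V3 :=
  ![v 0 * Real.cos θ + v 1 * Real.sin θ,
    -(v 0) * Real.sin θ + v 1 * Real.cos θ,
    v 2]

/-- The vector field `ξ(x) = (x₂, −x₁, h)`. -/
def xiVec (h : ℝ) (x : V3) : V3 := ![x 1, -(x 0), h]

/-- `|ξ(x)|² = h² + x₁² + x₂²`. -/
def xiNormSq (h : ℝ) (x : V3) : ℝ := h ^ 2 + (x 0) ^ 2 + (x 1) ^ 2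

/-- The helical swirl `v_ξ = v ⋅ ξ`. -/
def swirl (h : ℝ) (v : V3 → V3) (x : V3) : ℝ := ∑ i : Fin 3, v x i * xiVec h x i

/-- The orthogonal part `u = v − v_ξ ξ / |ξ|²` of a vector field `v`. -/
def orthPart (h : ℝ) (v : V3 → V3) (x : V3) : V3 :=
  fun i => v x i - swirl h v x * xiVec h x i / xiNormSq h x

/-- Third component of the vorticity: `w₃ = ∂₁v₂ − ∂₂v₁`. -/
def w3 (v : V3 → V3) (x : V3) : ℝ :=
  pd3 0 (fun y => v y 1) x - pd3 1 (fun y => v y 0) x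

/-- The elliptic operator `L_K φ = −div(K ∇φ)` with
`K = (h²+|x|²)⁻¹ ((h²+x₂², −x₁x₂), (−x₁x₂, h²+x₁²))`. -/
def LK (h : ℝ) (φ : V2 → ℝ) (x : V2) : ℝ :=
  -(pd2 0 (fun y =>
      ((h ^ 2 + (y 1) ^ 2) * pd2 0 φ y - y 0 * y 1 * pd2 1 φ y) /
        (h ^ 2 + (y 0) ^ 2 + (y 1) ^ 2)) x
    + pd2 1 (fun y =>
      (-(y 0 * y 1) * pd2 0 φ y + (h ^ 2 + (y 0) ^ 2) * pd2 1 φ y) /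
        (h ^ 2 + (y 0) ^ 2 + (y 1) ^ 2)) x)

/-- `n` is an outward normal vector of `Ω` at the boundary point `x`. -/
def IsOutwardNormal (Ω : Set V3) (x n : V3) : Prop :=
  ∃ ε > (0 : ℝ), (∀ t ∈ Set.Ioo (0 : ℝ) ε, x + t • n ∉ closure Ω) ∧
    (∀ t ∈ Set.Ioo (0 : ℝ) ε, x - t • n ∈ Ω)


namespace Htools
open Topology

lemma V3_eq_sum (u : V3) : u = u 0 • (Pi.single 0 1 : V3) + u 1 • (Pi.single 1 1 : V3)
    + u 2 • (Pi.single 2 1 : V3) := by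
  funext j
  fin_cases j <;> simp [Pi.single_apply]

lemma clm3_apply (L : V3 →L[ℝ] ℝ) (u : V3) :
    L u = u 0 * L (Pi.single 0 1) + u 1 * L (Pi.single 1 1) + u 2 * L (Pi.single 2 1) := by
  conv_lhs => rw [V3_eq_sum u]
  simp [map_add, map_smul, smul_eq_mul]

lemma clm3_ext (L L' : V3 →L[ℝ] ℝ) (h0 : L (Pi.single 0 1) = L' (Pi.single 0 1))
    (h1 : L (Pi.single 1 1) = L' (Pi.single 1 1)) (h2 : L (Pi.single 2 1) = L' (Pi.single 2 1)) :
    L = L' := by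
  ext u
  rw [clm3_apply L u, clm3_apply L' u, h0, h1, h2]

lemma pd3_congr {f g : V3 → ℝ} {x : V3} (h : f =ᶠ[𝓝 x] g) (i : Fin 3) :
    pd3 i f x = pd3 i g x := by unfold pd3; rw [h.fderiv_eq]

lemma pd2_congr {f g : V2 → ℝ} {x : V2} (h : f =ᶠ[𝓝 x] g) (i : Fin 2) :
    pd2 i f x = pd2 i g x := by unfold pd2; rw [h.fderiv_eq]

lemma pd3_hasFDerivAt {f : V3 → ℝ} {L : V3 →L[ℝ] ℝ} {x : V3} (h : HasFDerivAt f L x)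
    (i : Fin 3) : pd3 i f x = L (Pi.single i 1) := by unfold pd3; rw [h.fderiv]

lemma pd3_add {f g : V3 → ℝ} {x : V3} (hf : DifferentiableAt ℝ f x)
    (hg : DifferentiableAt ℝ g x) (i : Fin 3) :
    pd3 i (fun y => f y + g y) x = pd3 i f x + pd3 i g x := by
  unfold pd3; rw [fderiv_fun_add hf hg]; simp

lemma pd3_sub {f g : V3 → ℝ} {x : V3} (hf : DifferentiableAt ℝ f x)
    (hg : DifferentiableAt ℝ g x) (i : Fin 3) :
    pd3 i (fun y => f y - g y) x = pd3 i f x - pd3 i g x := by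
  unfold pd3; rw [fderiv_fun_sub hf hg]; simp

lemma pd3_neg {f : V3 → ℝ} {x : V3} (i : Fin 3) :
    pd3 i (fun y => -(f y)) x = -(pd3 i f x) := by
  unfold pd3; rw [fderiv_fun_neg]; simp

lemma pd3_mul {f g : V3 → ℝ} {x : V3} (hf : DifferentiableAt ℝ f x)
    (hg : DifferentiableAt ℝ g x) (i : Fin 3) :
    pd3 i (fun y => f y * g y) x = f x * pd3 i g x + pd3 i f x * g x := by
  unfold pd3; rw [fderiv_fun_mul hf hg]; simp [smul_eq_mul]; ring

lemma pd3_const (c : ℝ) (x : V3) (i : Fin 3) : pd3 i (fun _ => c) x = 0 := by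
  unfold pd3; rw [fderiv_fun_const]; simp

lemma pd3_coord (x : V3) (i j : Fin 3) :
    pd3 i (fun y => y j) x = if j = i then 1 else 0 := by
  have h : HasFDerivAt (fun y : V3 => y j)
      (ContinuousLinearMap.proj (R := ℝ) (φ := fun _ : Fin 3 => ℝ) j) x :=
    ContinuousLinearMap.hasFDerivAt (ContinuousLinearMap.proj (R := ℝ) (φ := fun _ : Fin 3 => ℝ) j)
  rw [pd3_hasFDerivAt h]
  simp [ContinuousLinearMap.proj_apply, Pi.single_apply]

lemma pd3_inv {g : V3 → ℝ} {x : V3} (hg : DifferentiableAt ℝ g x) (hg0 : g x ≠ 0) (i : Fin 3) :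
    pd3 i (fun y => (g y)⁻¹) x = -(pd3 i g x) / g x ^ 2 := by
  have h1 : HasDerivAt (fun s : ℝ => s⁻¹) (-((g x) ^ 2)⁻¹) (g x) := hasDerivAt_inv hg0
  have h2 : HasFDerivAt (fun y => (g y)⁻¹) ((-((g x) ^ 2)⁻¹) • fderiv ℝ g x) x :=
    h1.comp_hasFDerivAt x hg.hasFDerivAt
  rw [pd3_hasFDerivAt h2]
  simp only [ContinuousLinearMap.smul_apply, smul_eq_mul]
  unfold pd3
  field_simp

lemma pd3_div {f g : V3 → ℝ} {x : V3} (hf : DifferentiableAt ℝ f x)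
    (hg : DifferentiableAt ℝ g x) (hg0 : g x ≠ 0) (i : Fin 3) :
    pd3 i (fun y => f y / g y) x = (pd3 i f x * g x - f x * pd3 i g x) / g x ^ 2 := by
  simp only [div_eq_mul_inv]
  rw [pd3_mul (g := fun y => (g y)⁻¹) hf (hg.inv hg0), pd3_inv hg hg0]
  field_simp
  ring

-- the embedding as a continuous linear map
def embL : V2 →L[ℝ] V3 :=
  ContinuousLinearMap.pi ![ContinuousLinearMap.proj 0, ContinuousLinearMap.proj 1, 0]

lemma embL_apply (p : V2) : embL p = emb p := by
  funext j
  fin_cases j <;> simp [embL, emb, ContinuousLinearMap.pi_apply]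

lemma emb_eq : emb = fun p => embL p := funext fun p => (embL_apply p).symm

lemma embL_single0 : embL (Pi.single 0 1) = (Pi.single 0 1 : V3) := by
  funext j; fin_cases j <;> simp [embL, ContinuousLinearMap.pi_apply, Pi.single_apply]

lemma embL_single1 : embL (Pi.single 1 1) = (Pi.single 1 1 : V3) := by
  funext j; fin_cases j <;> simp [embL, ContinuousLinearMap.pi_apply, Pi.single_apply]

lemma pd2_comp_emb0 {f : V3 → ℝ} {p : V2} (hf : DifferentiableAt ℝ f (emb p)) :
    pd2 0 (fun q => f (emb q)) p = pd3 0 f (emb p) := by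
  have hcomp : (fun q => f (emb q)) = f ∘ (fun q => embL q) := by
    funext q; simp [embL_apply]
  unfold pd2 pd3
  rw [hcomp, fderiv_comp p (by rwa [embL_apply]) embL.differentiableAt]
  rw [embL.fderiv]
  simp only [ContinuousLinearMap.coe_comp', Function.comp_apply, embL_single0]
  rw [embL_apply]

lemma pd2_comp_emb1 {f : V3 → ℝ} {p : V2} (hf : DifferentiableAt ℝ f (emb p)) :
    pd2 1 (fun q => f (emb q)) p = pd3 1 f (emb p) := by
  have hcomp : (fun q => f (emb q)) = f ∘ (fun q => embL q) := by
    funext q; simp [embL_apply]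
  unfold pd2 pd3
  rw [hcomp, fderiv_comp p (by rwa [embL_apply]) embL.differentiableAt]
  rw [embL.fderiv]
  simp only [ContinuousLinearMap.coe_comp', Function.comp_apply, embL_single1]
  rw [embL_apply]

lemma emb_zero (p : V2) : emb p 0 = p 0 := rfl
lemma emb_one (p : V2) : emb p 1 = p 1 := rfl
lemma emb_two (p : V2) : emb p 2 = 0 := rfl


lemma vec3_0 (a b c : ℝ) : ![a, b, c] 0 = a := rfl
lemma vec3_1 (a b c : ℝ) : ![a, b, c] 1 = b := rfl
lemma vec3_2 (a b c : ℝ) : ![a, b, c] 2 = c := rfl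

lemma diff_coord {x : V3} {j : Fin 3} : DifferentiableAt ℝ (fun y : V3 => y j) x :=
  (ContinuousLinearMap.proj (R := ℝ) (φ := fun _ : Fin 3 => ℝ) j).differentiableAt

lemma pd3_helForm {g0 g1 g2 : V3 → ℝ} {x : V3}
    (h0 : DifferentiableAt ℝ g0 x) (h1 : DifferentiableAt ℝ g1 x)
    (h2 : DifferentiableAt ℝ g2 x) (k : Fin 3) (c : ℝ) :
    pd3 k (fun y => y 1 * g0 y - y 0 * g1 y + c * g2 y) x
      = (if (1 : Fin 3) = k then 1 else 0) * g0 x + x 1 * pd3 k g0 x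
        - ((if (0 : Fin 3) = k then 1 else 0) * g1 x + x 0 * pd3 k g1 x)
        + c * pd3 k g2 x := by
  have d1 : DifferentiableAt ℝ (fun y : V3 => y 1 * g0 y) x := diff_coord.mul h0
  have d2 : DifferentiableAt ℝ (fun y : V3 => y 0 * g1 y) x := diff_coord.mul h1
  have d3 : DifferentiableAt ℝ (fun y : V3 => c * g2 y) x := (differentiableAt_const c).mul h2
  rw [pd3_add (f := fun y => y 1 * g0 y - y 0 * g1 y) (d1.sub d2) d3, pd3_sub d1 d2, pd3_mul diff_coord h0, pd3_mul diff_coord h1,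
    pd3_mul (differentiableAt_const c) h2, pd3_coord, pd3_coord, pd3_const]
  ring

lemma diff_quadN {x : V3} (c : ℝ) :
    DifferentiableAt ℝ (fun y : V3 => c + y 0 ^ 2 + y 1 ^ 2) x := by
  have : (fun y : V3 => c + y 0 ^ 2 + y 1 ^ 2) = fun y : V3 => (c + y 0 * y 0) + y 1 * y 1 := by
    funext y; ring
  rw [this]
  exact ((differentiableAt_const c).add (diff_coord.mul diff_coord)).add (diff_coord.mul diff_coord)

lemma pd3_quadN {x : V3} (k : Fin 3) (c : ℝ) :
    pd3 k (fun y : V3 => c + y 0 ^ 2 + y 1 ^ 2) x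
      = (if (0 : Fin 3) = k then 1 else 0) * (2 * x 0)
        + (if (1 : Fin 3) = k then 1 else 0) * (2 * x 1) := by
  have h0 : (fun y : V3 => c + y 0 ^ 2 + y 1 ^ 2) = fun y : V3 => (c + y 0 * y 0) + y 1 * y 1 := by
    funext y; ring
  rw [h0, pd3_add (f := fun y => c + y 0 * y 0) (g := fun y => y 1 * y 1) ((differentiableAt_const c).add (diff_coord.mul diff_coord))
      (diff_coord.mul diff_coord),
    pd3_add (g := fun y => y 0 * y 0) (differentiableAt_const c) (diff_coord.mul diff_coord),
    pd3_mul diff_coord diff_coord, pd3_mul diff_coord diff_coord, pd3_coord, pd3_coord, pd3_const]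
  split_ifs <;> ring


lemma fin3_10 : ¬((1:Fin 3) = 0) := by decide
lemma fin3_01 : ¬((0:Fin 3) = 1) := by decide
lemma fin3_02 : ¬((0:Fin 3) = 2) := by decide
lemma fin3_12 : ¬((1:Fin 3) = 2) := by decide

lemma pd3_helForm0 {g0 g1 g2 : V3 → ℝ} {x : V3}
    (h0 : DifferentiableAt ℝ g0 x) (h1 : DifferentiableAt ℝ g1 x)
    (h2 : DifferentiableAt ℝ g2 x) (c : ℝ) :
    pd3 0 (fun y => y 1 * g0 y - y 0 * g1 y + c * g2 y) x
      = x 1 * pd3 0 g0 x - (g1 x + x 0 * pd3 0 g1 x) + c * pd3 0 g2 x := by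
  rw [pd3_helForm h0 h1 h2 0 c, if_neg fin3_10, if_pos rfl]; ring

lemma pd3_helForm1 {g0 g1 g2 : V3 → ℝ} {x : V3}
    (h0 : DifferentiableAt ℝ g0 x) (h1 : DifferentiableAt ℝ g1 x)
    (h2 : DifferentiableAt ℝ g2 x) (c : ℝ) :
    pd3 1 (fun y => y 1 * g0 y - y 0 * g1 y + c * g2 y) x
      = g0 x + x 1 * pd3 1 g0 x - x 0 * pd3 1 g1 x + c * pd3 1 g2 x := by
  rw [pd3_helForm h0 h1 h2 1 c, if_pos rfl, if_neg fin3_01]; ring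

lemma pd3_helForm2 {g0 g1 g2 : V3 → ℝ} {x : V3}
    (h0 : DifferentiableAt ℝ g0 x) (h1 : DifferentiableAt ℝ g1 x)
    (h2 : DifferentiableAt ℝ g2 x) (c : ℝ) :
    pd3 2 (fun y => y 1 * g0 y - y 0 * g1 y + c * g2 y) x
      = x 1 * pd3 2 g0 x - x 0 * pd3 2 g1 x + c * pd3 2 g2 x := by
  rw [pd3_helForm h0 h1 h2 2 c, if_neg fin3_12, if_neg fin3_02]; ring

lemma pd3_quadN0 {x : V3} (c : ℝ) :
    pd3 0 (fun y : V3 => c + y 0 ^ 2 + y 1 ^ 2) x = 2 * x 0 := by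
  rw [pd3_quadN 0 c, if_pos rfl, if_neg fin3_10]; ring

lemma pd3_quadN1 {x : V3} (c : ℝ) :
    pd3 1 (fun y : V3 => c + y 0 ^ 2 + y 1 ^ 2) x = 2 * x 1 := by
  rw [pd3_quadN 1 c, if_neg fin3_01, if_pos rfl]; ring

lemma pd3_coord00 {x : V3} : pd3 0 (fun y : V3 => y 0) x = 1 := by
  rw [pd3_coord x 0 0, if_pos rfl]

lemma pd3_coord11 {x : V3} : pd3 1 (fun y : V3 => y 1) x = 1 := by
  rw [pd3_coord x 1 1, if_pos rfl]

lemma pd3_coord01 {x : V3} : pd3 0 (fun y : V3 => y 1) x = 0 := by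
  rw [pd3_coord x 0 1, if_neg fin3_10]

lemma pd3_coord10 {x : V3} : pd3 1 (fun y : V3 => y 0) x = 0 := by
  rw [pd3_coord x 1 0, if_neg fin3_01]

lemma diff_div {f g : V3 → ℝ} {x : V3} (hf : DifferentiableAt ℝ f x)
    (hg : DifferentiableAt ℝ g x) (hg0 : g x ≠ 0) :
    DifferentiableAt ℝ (fun y => f y / g y) x := by
  simp only [div_eq_mul_inv]
  exact hf.mul (hg.inv hg0)

lemma diff_div_const {f : V3 → ℝ} {x : V3} (hf : DifferentiableAt ℝ f x) (c : ℝ) :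
    DifferentiableAt ℝ (fun y => f y / c) x := by
  simp only [div_eq_mul_inv]
  exact hf.mul_const _

end Htools


set_option maxHeartbeats 1000000 in
theorem keyAlg (a b h : ℝ)
    (A0 A1 A2 D00 D01 D02 D10 D11 D12 D20 D21 D22 : ℝ)
    (B000 B001 B002 B010 B011 B012 B110 B111 B112 : ℝ)
    (B020 B021 B022 B120 B121 B122 : ℝ)
    (Pd0 Pd1 Pd2 Dt0 Dt1 Dt2 DtD01 DtD10 : ℝ)
    (S N U0 U1 pa pb s0 s1 t0 t1 r0 r1 : ℝ)
    (hh : h ≠ 0)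
    (hS : S = b*A0 - a*A1 + h*A2)
    (hN : N = h^2 + a^2 + b^2)
    (hU0 : U0 = A0 - S*b/N)
    (hU1 : U1 = A1 + S*a/N)
    (hpa : pa = (a*b*U0 - (h^2+a^2)*U1)/h^2)
    (hpb : pb = ((h^2+b^2)*U0 - a*b*U1)/h^2)
    (hs0 : s0 = b*D00 - a*D01 + h*D02 - A1)
    (hs1 : s1 = b*D10 - a*D11 + h*D12 + A0)
    (ht0 : t0 = -D02/h + s0/N - 2*a*S/N^2)
    (ht1 : t1 = -D12/h + s1/N - 2*b*S/N^2)
    (hr0 : r0 = B001 - B010)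
    (hr1 : r1 = B011 - B110)
    (hR3_0 : b*D00 - a*D10 + h*D20 = A1)
    (hR3_1 : b*D01 - a*D11 + h*D21 = -A0)
    (hR3_2 : b*D02 - a*D12 + h*D22 = 0)
    (hR4_00 : -D10 + b*B000 - a*B010 + h*B020 = D01)
    (hR4_01 : -D11 + b*B001 - a*B011 + h*B021 = -D00)
    (hR4_02 : -D12 + b*B002 - a*B012 + h*B022 = 0)
    (hR4_10 : D00 + b*B010 - a*B110 + h*B120 = D11)
    (hR4_11 : D01 + b*B011 - a*B111 + h*B121 = -D10)
    (hR4_12 : D02 + b*B012 - a*B112 + h*B122 = 0)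
    (hR5 : b*Pd0 - a*Pd1 + h*Pd2 = 0)
    (hR1_0 : Dt0 + (A0*D00 + A1*D10 + A2*D20) = -Pd0)
    (hR1_1 : Dt1 + (A0*D01 + A1*D11 + A2*D21) = -Pd1)
    (hR1_2 : Dt2 + (A0*D02 + A1*D12 + A2*D22) = -Pd2)
    (hR2 : D00 + D11 + D22 = 0)
    (hR2'0 : B000 + B011 + B022 = 0)
    (hR2'1 : B010 + B111 + B122 = 0)
    (hR6 : DtD01 - DtD10 + ((D00*D01 + D01*D11 + D02*D21) + (A0*B001 + A1*B011 + A2*B021)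
      - (D10*D00 + D11*D10 + D12*D20) - (A0*B010 + A1*B110 + A2*B120)) = 0) :
    (b*Dt0 - a*Dt1 + h*Dt2 + (pb*s0 - pa*s1) = 0) ∧
    ((DtD01 - DtD10) + (pb*r0 - pa*r1)
        = s0*t1 - s1*t0 + 2*S*(b*s0 - a*s1)/N^2) ∧
    ((D01 + (a*s0 + S)/N - 2*a^2*S/N^2) - (D10 - ((b*s1 + S)/N - 2*b^2*S/N^2))
        = (D01 - D10) + 2*h^2*S/N^2 + (a*s0 + b*s1)/N) := by
  have hN0 : N ≠ 0 := by
    rw [hN]; positivity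
  -- solved forms
  have eD20 : D20 = (A1 - b*D00 + a*D10)/h := by field_simp; linarith
  have eD21 : D21 = (-A0 - b*D01 + a*D11)/h := by field_simp; linarith
  have eD22 : D22 = (a*D12 - b*D02)/h := by field_simp; linarith
  have eB020 : B020 = (D01 + D10 - b*B000 + a*B010)/h := by field_simp; linarith
  have eB021 : B021 = (-D00 + D11 - b*B001 + a*B011)/h := by field_simp; linarith
  have eB022 : B022 = (D12 - b*B002 + a*B012)/h := by field_simp; linarith
  have eB120 : B120 = (D11 - D00 - b*B010 + a*B110)/h := by field_simp; linarith
  have eB121 : B121 = (-D10 - D01 - b*B011 + a*B111)/h := by field_simp; linarith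
  have eB122 : B122 = (-D02 - b*B012 + a*B112)/h := by field_simp; linarith
  have ePd2 : Pd2 = (a*Pd1 - b*Pd0)/h := by field_simp; linarith
  have eDt0 : Dt0 = -Pd0 - (A0*D00 + A1*D10 + A2*D20) := by linarith
  have eDt1 : Dt1 = -Pd1 - (A0*D01 + A1*D11 + A2*D21) := by linarith
  have eDt2 : Dt2 = -Pd2 - (A0*D02 + A1*D12 + A2*D22) := by linarith
  have eDtD01 : DtD01 = DtD10 - ((D00*D01 + D01*D11 + D02*D21) + (A0*B001 + A1*B011 + A2*B021)
      - (D10*D00 + D11*D10 + D12*D20) - (A0*B010 + A1*B110 + A2*B120)) := by linarith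
  have eD11 : D11 = -D00 - D22 := by linarith
  have eB011 : B011 = -B000 - B022 := by linarith
  have eB111 : B111 = -B010 - B122 := by linarith
  subst hS hN hU0 hU1 hpa hpb hs0 hs1 ht0 ht1 hr0 hr1
  subst eDtD01 eDt0 eDt1 eDt2 ePd2 eB011 eB111 eB021 eB120 eD11 eD20 eD21 eB020 eB121 eB022 eB122 eD22
  refine ⟨?_, ?_, ?_⟩
  · field_simp
    ring
  · field_simp
    ring
  · field_simp
    ring


set_option maxHeartbeats 4000000 in
/-- 2D vorticity-stream formulation of the 3D Euler equations under helical symmetry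
with swirl: the restrictions `v(x₁,x₂,t) = v_ξ(x₁,x₂,0,t)` and `w(x₁,x₂,t) = w₃(x₁,x₂,0,t)`
satisfy the evolved system on `D × (0,T)`. -/
theorem twoD_vorticity_stream_formulation (h T : ℝ) (hh : 0 < h) (hT : 0 < T)
    (Ω : Set V3) (hΩopen : IsOpen Ω) (hΩ : ∀ θ : ℝ, Hmap h θ '' Ω = Ω)
    (D : Set V2) (hD : D = {p : V2 | emb p ∈ Ω})
    (hDconn : IsConnected D) (hDsc : SimplyConnectedSpace D)
    (hDbdd : Bornology.IsBounded D)
    (v : ℝ → V3 → V3) (P : ℝ → V3 → ℝ)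
    (hv : ∀ i : Fin 3, ContDiffOn ℝ 2 (fun q : ℝ × V3 => v q.1 q.2 i)
      (Set.Ioo 0 T ×ˢ Ω))
    (hP : ContDiffOn ℝ 1 (fun q : ℝ × V3 => P q.1 q.2) (Set.Ioo 0 T ×ˢ Ω))
    (hhel : ∀ t ∈ Set.Ioo (0 : ℝ) T, ∀ θ : ℝ, ∀ x ∈ Ω,
      v t (Hmap h θ x) = Qrot θ (v t x) ∧ P t (Hmap h θ x) = P t x)
    (heuler : ∀ t ∈ Set.Ioo (0 : ℝ) T, ∀ x ∈ Ω, ∀ i : Fin 3,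
      deriv (fun s => v s x i) t
        + ∑ j : Fin 3, v t x j * pd3 j (fun y => v t y i) x = -(pd3 i (P t) x))
    (hdiv : ∀ t ∈ Set.Ioo (0 : ℝ) T, ∀ x ∈ Ω,
      ∑ i : Fin 3, pd3 i (fun y => v t y i) x = 0)
    (hbc : ∀ t ∈ Set.Ioo (0 : ℝ) T, ∀ x ∈ frontier Ω, ∀ n : V3,
      IsOutwardNormal Ω x n → ∑ i : Fin 3, v t x i * n i = 0)
    -- the stream function of the orthogonal part of `v(⋅,t)`
    (φ : ℝ → V2 → ℝ)
    (hφ0 : ∀ t ∈ Set.Ioo (0 : ℝ) T, ∀ p ∈ frontier D, φ t p = 0)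
    (hφ : ∀ t ∈ Set.Ioo (0 : ℝ) T, ∀ p ∈ D,
      orthPart h (v t) (emb p) 0 =
        (-(p 0 * p 1) * pd2 0 (φ t) p + (h ^ 2 + (p 0) ^ 2) * pd2 1 (φ t) p) /
          (h ^ 2 + (p 0) ^ 2 + (p 1) ^ 2) ∧
      orthPart h (v t) (emb p) 1 =
        (-(h ^ 2 + (p 1) ^ 2) * pd2 0 (φ t) p + p 0 * p 1 * pd2 1 (φ t) p) /
          (h ^ 2 + (p 0) ^ 2 + (p 1) ^ 2)) :
    -- the 2D restrictions of the swirl and of `w₃`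
    ∀ t ∈ Set.Ioo (0 : ℝ) T, ∀ p ∈ D,
      (deriv (fun s => swirl h (v s) (emb p)) t
          + (pd2 1 (φ t) p * pd2 0 (fun q => swirl h (v t) (emb q)) p
            - pd2 0 (φ t) p * pd2 1 (fun q => swirl h (v t) (emb q)) p) = 0) ∧
      (deriv (fun s => w3 (v s) (emb p)) t
          + (pd2 1 (φ t) p * pd2 0 (fun q => w3 (v t) (emb q)) p
            - pd2 0 (φ t) p * pd2 1 (fun q => w3 (v t) (emb q)) p) =
        pd2 0 (fun q => swirl h (v t) (emb q)) p *
            pd2 1 (fun q => (q 0 * pd2 0 (φ t) q + q 1 * pd2 1 (φ t) q) /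
              (h ^ 2 + (q 0) ^ 2 + (q 1) ^ 2)) p
          - pd2 1 (fun q => swirl h (v t) (emb q)) p *
            pd2 0 (fun q => (q 0 * pd2 0 (φ t) q + q 1 * pd2 1 (φ t) q) /
              (h ^ 2 + (q 0) ^ 2 + (q 1) ^ 2)) p
          + 2 * swirl h (v t) (emb p) *
              (p 1 * pd2 0 (fun q => swirl h (v t) (emb q)) p
                - p 0 * pd2 1 (fun q => swirl h (v t) (emb q)) p) /
              (h ^ 2 + (p 0) ^ 2 + (p 1) ^ 2) ^ 2) ∧
      (LK h (φ t) p =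
        w3 (v t) (emb p)
          + 2 * h ^ 2 * swirl h (v t) (emb p) /
              (h ^ 2 + (p 0) ^ 2 + (p 1) ^ 2) ^ 2
          + (p 0 * pd2 0 (fun q => swirl h (v t) (emb q)) p
              + p 1 * pd2 1 (fun q => swirl h (v t) (emb q)) p) /
              (h ^ 2 + (p 0) ^ 2 + (p 1) ^ 2)) := by
  intro t ht p hp
  classical
  -- ## basic setup
  have hx : emb p ∈ Ω := by rw [hD] at hp; exact hp
  have hembc : Continuous emb := by rw [Htools.emb_eq]; exact Htools.embL.continuous
  have hDo : IsOpen D := by rw [hD]; exact hΩopen.preimage hembc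
  have hOo : IsOpen (Set.Ioo (0:ℝ) T ×ˢ Ω) := isOpen_Ioo.prod hΩopen
  have htx : (t, emb p) ∈ Set.Ioo (0:ℝ) T ×ˢ Ω := ⟨ht, hx⟩
  have hh0 : h ≠ 0 := ne_of_gt hh
  have hh2 : (h:ℝ)^2 ≠ 0 := by positivity
  have hNne3 : ∀ y : V3, h^2 + y 0 ^ 2 + y 1 ^ 2 ≠ 0 := fun y => by positivity
  have hNne2 : ∀ q : V2, h^2 + q 0 ^ 2 + q 1 ^ 2 ≠ 0 := fun q => by positivity
  -- ## regularity of space slices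
  have hvC : ∀ i : Fin 3, ContDiffOn ℝ 2 (fun z => v t z i) Ω := by
    intro i
    have hincl : ContDiff ℝ 2 (fun z : V3 => ((t, z) : ℝ × V3)) := contDiff_const.prodMk contDiff_id
    exact (hv i).comp hincl.contDiffOn (fun z hz => ⟨ht, hz⟩)
  have hvAt : ∀ i : Fin 3, ∀ y ∈ Ω, ContDiffAt ℝ 2 (fun z => v t z i) y :=
    fun i y hy => (hvC i).contDiffAt (hΩopen.mem_nhds hy)
  have hvD : ∀ i : Fin 3, ∀ y ∈ Ω, DifferentiableAt ℝ (fun z => v t z i) y :=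
    fun i y hy => (hvAt i y hy).differentiableAt two_ne_zero
  have hfdD : ∀ i : Fin 3, ∀ y ∈ Ω, DifferentiableAt ℝ (fderiv ℝ (fun z => v t z i)) y :=
    fun i y hy => ((hvAt i y hy).fderiv_right (m := 1) (by norm_num)).differentiableAt one_ne_zero
  have hpdD : ∀ (j i : Fin 3), ∀ y ∈ Ω,
      DifferentiableAt ℝ (fun z => pd3 j (fun w => v t w i) z) y := by
    intro j i y hy
    exact (hfdD i y hy).clm_apply (differentiableAt_const _)
  have hBval : ∀ (i k j : Fin 3),
      pd3 k (fun z => pd3 j (fun w => v t w i) z) (emb p)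
        = fderiv ℝ (fderiv ℝ (fun z => v t z i)) (emb p) (Pi.single k 1) (Pi.single j 1) := by
    intro i k j
    unfold pd3
    rw [fderiv_clm_apply (hfdD i _ hx) (differentiableAt_const _)]
    simp
  have hMsym : ∀ i : Fin 3, ∀ u w : V3,
      fderiv ℝ (fderiv ℝ (fun z => v t z i)) (emb p) u w
        = fderiv ℝ (fderiv ℝ (fun z => v t z i)) (emb p) w u :=
    fun i => (hvAt i _ hx).isSymmSndFDerivAt (by simp [minSmoothness_of_isRCLikeNormedField])
  -- ## infinitesimal helical invariance
  have hF3 : ∀ y ∈ Ω, ∀ i : Fin 3,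
      y 1 * pd3 0 (fun z => v t z i) y - y 0 * pd3 1 (fun z => v t z i) y
        + h * pd3 2 (fun z => v t z i) y = ![v t y 1, -(v t y 0), 0] i := by
    intro y hy i
    have hγ : HasDerivAt (fun θ => Hmap h θ y) ![y 1, -(y 0), h] 0 := by
      rw [hasDerivAt_pi]
      intro j
      fin_cases j
      · simp only [Hmap, Matrix.cons_val_zero]
        have hd := ((Real.hasDerivAt_cos 0).const_mul (y 0)).add
          ((Real.hasDerivAt_sin 0).const_mul (y 1))
        simpa [Pi.add_def] using hd
      · simp only [Hmap, Matrix.cons_val_one, Matrix.head_cons]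
        have hd := ((Real.hasDerivAt_sin 0).const_mul (-(y 0))).add
          ((Real.hasDerivAt_cos 0).const_mul (y 1))
        simpa [Pi.add_def] using hd
      · simp only [Hmap]
        have hd := (hasDerivAt_const (0:ℝ) (y 2)).add ((hasDerivAt_id (0:ℝ)).const_mul h)
        simpa [Pi.add_def] using hd
    have hγ0 : Hmap h 0 y = y := by
      funext j; fin_cases j <;> simp [Hmap]
    have hvfd : HasFDerivAt (fun z => v t z i) (fderiv ℝ (fun z => v t z i) y) (Hmap h 0 y) := by
      rw [hγ0]; exact (hvD i y hy).hasFDerivAt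
    have hcomp : HasDerivAt (fun θ => v t (Hmap h θ y) i)
        (fderiv ℝ (fun z => v t z i) y ![y 1, -(y 0), h]) 0 := by have := hvfd.comp_hasDerivAt 0 hγ; exact this
    have hfun : (fun θ => v t (Hmap h θ y) i) = fun θ => Qrot θ (v t y) i := by
      funext θ; rw [(hhel t ht θ y hy).1]
    rw [hfun] at hcomp
    have hQ : HasDerivAt (fun θ => Qrot θ (v t y) i) (![v t y 1, -(v t y 0), 0] i) 0 := by
      fin_cases i
      · simp only [Qrot, Matrix.cons_val_zero, Htools.vec3_0]
        have hd := ((Real.hasDerivAt_cos 0).const_mul (v t y 0)).add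
          ((Real.hasDerivAt_sin 0).const_mul (v t y 1))
        simpa [mul_comm, Pi.add_def] using hd
      · simp only [Qrot, Matrix.cons_val_one, Matrix.head_cons, Htools.vec3_1]
        have hd := ((Real.hasDerivAt_sin 0).const_mul (-(v t y 0))).add
          ((Real.hasDerivAt_cos 0).const_mul (v t y 1))
        simpa [mul_comm, Pi.add_def] using hd
      · simp only [Qrot, Htools.vec3_2]
        simpa using hasDerivAt_const (0:ℝ) (v t y 2)
    have huniq := hcomp.unique hQ
    rw [Htools.clm3_apply] at huniq
    simp only [Htools.vec3_0, Htools.vec3_1, Htools.vec3_2] at huniq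
    unfold pd3
    linarith [huniq]
  -- componentwise multiplication forms for `Qrot` used above may need adjustment
  -- ## helical invariance of the pressure
  have hPC : ContDiffOn ℝ 1 (fun z => P t z) Ω := by
    have hincl : ContDiff ℝ 1 (fun z : V3 => ((t, z) : ℝ × V3)) := contDiff_const.prodMk contDiff_id
    exact hP.comp hincl.contDiffOn (fun z hz => ⟨ht, hz⟩)
  have hPdV : ∀ y ∈ Ω, DifferentiableAt ℝ (P t) y :=
    fun y hy => (hPC.contDiffAt (hΩopen.mem_nhds hy)).differentiableAt one_ne_zero
  have hR5 : p 1 * pd3 0 (P t) (emb p) - p 0 * pd3 1 (P t) (emb p) + h * pd3 2 (P t) (emb p) = 0 := by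
    have hγ : HasDerivAt (fun θ => Hmap h θ (emb p)) ![emb p 1, -(emb p 0), h] 0 := by
      rw [hasDerivAt_pi]
      intro j
      fin_cases j
      · simp only [Hmap, Matrix.cons_val_zero]
        have hd := ((Real.hasDerivAt_cos 0).const_mul (emb p 0)).add
          ((Real.hasDerivAt_sin 0).const_mul (emb p 1))
        simpa [Pi.add_def] using hd
      · simp only [Hmap, Matrix.cons_val_one, Matrix.head_cons]
        have hd := ((Real.hasDerivAt_sin 0).const_mul (-(emb p 0))).add
          ((Real.hasDerivAt_cos 0).const_mul (emb p 1))
        simpa [Pi.add_def] using hd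
      · simp only [Hmap]
        have hd := (hasDerivAt_const (0:ℝ) (emb p 2)).add ((hasDerivAt_id (0:ℝ)).const_mul h)
        simpa [Pi.add_def] using hd
    have hγ0 : Hmap h 0 (emb p) = emb p := by
      funext j; fin_cases j <;> simp [Hmap]
    have hvfd : HasFDerivAt (P t) (fderiv ℝ (P t) (emb p)) (Hmap h 0 (emb p)) := by
      rw [hγ0]; exact (hPdV _ hx).hasFDerivAt
    have hcomp : HasDerivAt (fun θ => P t (Hmap h θ (emb p)))
        (fderiv ℝ (P t) (emb p) ![emb p 1, -(emb p 0), h]) 0 := by have := hvfd.comp_hasDerivAt 0 hγ; exact this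
    have hfun : (fun θ => P t (Hmap h θ (emb p))) = fun _ => P t (emb p) := by
      funext θ; rw [(hhel t ht θ (emb p) hx).2]
    rw [hfun] at hcomp
    have hQ : HasDerivAt (fun _ : ℝ => P t (emb p)) 0 0 := hasDerivAt_const _ _
    have huniq := hcomp.unique hQ
    rw [Htools.clm3_apply] at huniq
    simp only [Htools.vec3_0, Htools.vec3_1, Htools.vec3_2, Htools.emb_zero, Htools.emb_one]
      at huniq
    unfold pd3
    linarith [huniq]

  -- ## pointwise helical relations (R3)
  have hR3_0 : p 1 * pd3 0 (fun z => v t z 0) (emb p) - p 0 * pd3 1 (fun z => v t z 0) (emb p) + h * pd3 2 (fun z => v t z 0) (emb p) = v t (emb p) 1 := by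
    have hf := hF3 (emb p) hx 0
    simpa only [Htools.vec3_0, Htools.emb_zero, Htools.emb_one] using hf
  have hR3_1 : p 1 * pd3 0 (fun z => v t z 1) (emb p) - p 0 * pd3 1 (fun z => v t z 1) (emb p) + h * pd3 2 (fun z => v t z 1) (emb p) = -(v t (emb p) 0) := by
    have hf := hF3 (emb p) hx 1
    simpa only [Htools.vec3_1, Htools.emb_zero, Htools.emb_one] using hf
  have hR3_2 : p 1 * pd3 0 (fun z => v t z 2) (emb p) - p 0 * pd3 1 (fun z => v t z 2) (emb p) + h * pd3 2 (fun z => v t z 2) (emb p) = 0 := by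
    have hf := hF3 (emb p) hx 2
    simpa only [Htools.vec3_2, Htools.emb_zero, Htools.emb_one] using hf
  -- ## differentiated helical relations (R4)
  have hZ : ∀ i k : Fin 3,
      pd3 k (fun y => y 1 * pd3 0 (fun z => v t z i) y - y 0 * pd3 1 (fun z => v t z i) y
          + h * pd3 2 (fun z => v t z i) y) (emb p)
        = pd3 k (fun y => ![v t y 1, -(v t y 0), 0] i) (emb p) := by
    intro i k
    apply Htools.pd3_congr _ k
    filter_upwards [hΩopen.mem_nhds hx] with y hy
    exact hF3 y hy i
  have hR4_00 : -(pd3 1 (fun z => v t z 0) (emb p)) + p 1 * fderiv ℝ (fderiv ℝ (fun z => v t z 0)) (emb p) (Pi.single 0 1) (Pi.single 0 1) - p 0 * fderiv ℝ (fderiv ℝ (fun z => v t z 0)) (emb p) (Pi.single 0 1) (Pi.single 1 1) + h * fderiv ℝ (fderiv ℝ (fun z => v t z 0)) (emb p) (Pi.single 0 1) (Pi.single 2 1) = pd3 0 (fun z => v t z 1) (emb p) := by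
    have hz := hZ 0 0
    rw [Htools.pd3_helForm0 (hpdD 0 0 _ hx) (hpdD 1 0 _ hx) (hpdD 2 0 _ hx) h,
      hBval 0 0 0, hBval 0 0 1, hBval 0 0 2] at hz
    simp only [Htools.vec3_0, Htools.emb_zero, Htools.emb_one] at hz
    linarith [hz]
  have hR4_01 : -(pd3 1 (fun z => v t z 1) (emb p)) + p 1 * fderiv ℝ (fderiv ℝ (fun z => v t z 1)) (emb p) (Pi.single 0 1) (Pi.single 0 1) - p 0 * fderiv ℝ (fderiv ℝ (fun z => v t z 1)) (emb p) (Pi.single 0 1) (Pi.single 1 1) + h * fderiv ℝ (fderiv ℝ (fun z => v t z 1)) (emb p) (Pi.single 0 1) (Pi.single 2 1) = -(pd3 0 (fun z => v t z 0) (emb p)) := by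
    have hz := hZ 1 0
    rw [Htools.pd3_helForm0 (hpdD 0 1 _ hx) (hpdD 1 1 _ hx) (hpdD 2 1 _ hx) h,
      hBval 1 0 0, hBval 1 0 1, hBval 1 0 2] at hz
    simp only [Htools.vec3_1] at hz
    rw [Htools.pd3_neg] at hz
    simp only [Htools.emb_zero, Htools.emb_one] at hz
    linarith [hz]
  have hR4_02 : -(pd3 1 (fun z => v t z 2) (emb p)) + p 1 * fderiv ℝ (fderiv ℝ (fun z => v t z 2)) (emb p) (Pi.single 0 1) (Pi.single 0 1) - p 0 * fderiv ℝ (fderiv ℝ (fun z => v t z 2)) (emb p) (Pi.single 0 1) (Pi.single 1 1) + h * fderiv ℝ (fderiv ℝ (fun z => v t z 2)) (emb p) (Pi.single 0 1) (Pi.single 2 1) = 0 := by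
    have hz := hZ 2 0
    rw [Htools.pd3_helForm0 (hpdD 0 2 _ hx) (hpdD 1 2 _ hx) (hpdD 2 2 _ hx) h,
      hBval 2 0 0, hBval 2 0 1, hBval 2 0 2] at hz
    simp only [Htools.vec3_2] at hz
    rw [Htools.pd3_const] at hz
    simp only [Htools.emb_zero, Htools.emb_one] at hz
    linarith [hz]
  have hR4_10 : pd3 0 (fun z => v t z 0) (emb p) + p 1 * fderiv ℝ (fderiv ℝ (fun z => v t z 0)) (emb p) (Pi.single 0 1) (Pi.single 1 1) - p 0 * fderiv ℝ (fderiv ℝ (fun z => v t z 0)) (emb p) (Pi.single 1 1) (Pi.single 1 1) + h * fderiv ℝ (fderiv ℝ (fun z => v t z 0)) (emb p) (Pi.single 1 1) (Pi.single 2 1) = pd3 1 (fun z => v t z 1) (emb p) := by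
    have hz := hZ 0 1
    rw [Htools.pd3_helForm1 (hpdD 0 0 _ hx) (hpdD 1 0 _ hx) (hpdD 2 0 _ hx) h,
      hBval 0 1 0, hBval 0 1 1, hBval 0 1 2] at hz
    rw [hMsym 0 (Pi.single 1 1) (Pi.single 0 1)] at hz
    simp only [Htools.vec3_0, Htools.emb_zero, Htools.emb_one] at hz
    linarith [hz]
  have hR4_11 : pd3 0 (fun z => v t z 1) (emb p) + p 1 * fderiv ℝ (fderiv ℝ (fun z => v t z 1)) (emb p) (Pi.single 0 1) (Pi.single 1 1) - p 0 * fderiv ℝ (fderiv ℝ (fun z => v t z 1)) (emb p) (Pi.single 1 1) (Pi.single 1 1) + h * fderiv ℝ (fderiv ℝ (fun z => v t z 1)) (emb p) (Pi.single 1 1) (Pi.single 2 1) = -(pd3 1 (fun z => v t z 0) (emb p)) := by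
    have hz := hZ 1 1
    rw [Htools.pd3_helForm1 (hpdD 0 1 _ hx) (hpdD 1 1 _ hx) (hpdD 2 1 _ hx) h,
      hBval 1 1 0, hBval 1 1 1, hBval 1 1 2] at hz
    rw [hMsym 1 (Pi.single 1 1) (Pi.single 0 1)] at hz
    simp only [Htools.vec3_1] at hz
    rw [Htools.pd3_neg] at hz
    simp only [Htools.emb_zero, Htools.emb_one] at hz
    linarith [hz]
  have hR4_12 : pd3 0 (fun z => v t z 2) (emb p) + p 1 * fderiv ℝ (fderiv ℝ (fun z => v t z 2)) (emb p) (Pi.single 0 1) (Pi.single 1 1) - p 0 * fderiv ℝ (fderiv ℝ (fun z => v t z 2)) (emb p) (Pi.single 1 1) (Pi.single 1 1) + h * fderiv ℝ (fderiv ℝ (fun z => v t z 2)) (emb p) (Pi.single 1 1) (Pi.single 2 1) = 0 := by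
    have hz := hZ 2 1
    rw [Htools.pd3_helForm1 (hpdD 0 2 _ hx) (hpdD 1 2 _ hx) (hpdD 2 2 _ hx) h,
      hBval 2 1 0, hBval 2 1 1, hBval 2 1 2] at hz
    rw [hMsym 2 (Pi.single 1 1) (Pi.single 0 1)] at hz
    simp only [Htools.vec3_2] at hz
    rw [Htools.pd3_const] at hz
    simp only [Htools.emb_zero, Htools.emb_one] at hz
    linarith [hz]
  -- ## divergence relations
  have hR2 : pd3 0 (fun z => v t z 0) (emb p) + pd3 1 (fun z => v t z 1) (emb p) + pd3 2 (fun z => v t z 2) (emb p) = 0 := by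
    have hd := hdiv t ht (emb p) hx
    rwa [Fin.sum_univ_three] at hd
  have hdivf : ∀ y ∈ Ω, pd3 0 (fun z => v t z 0) y + pd3 1 (fun z => v t z 1) y
      + pd3 2 (fun z => v t z 2) y = 0 := by
    intro y hy
    have hd := hdiv t ht y hy
    rwa [Fin.sum_univ_three] at hd
  have hR2' : ∀ k : Fin 3,
      fderiv ℝ (fderiv ℝ (fun z => v t z 0)) (emb p) (Pi.single k 1) (Pi.single 0 1)
        + fderiv ℝ (fderiv ℝ (fun z => v t z 1)) (emb p) (Pi.single k 1) (Pi.single 1 1)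
        + fderiv ℝ (fderiv ℝ (fun z => v t z 2)) (emb p) (Pi.single k 1) (Pi.single 2 1) = 0 := by
    intro k
    have h0 : pd3 k (fun y => pd3 0 (fun z => v t z 0) y + pd3 1 (fun z => v t z 1) y
        + pd3 2 (fun z => v t z 2) y) (emb p) = pd3 k (fun _ => (0:ℝ)) (emb p) := by
      apply Htools.pd3_congr _ k
      filter_upwards [hΩopen.mem_nhds hx] with y hy
      exact hdivf y hy
    rw [Htools.pd3_const] at h0
    rw [Htools.pd3_add ((hpdD 0 0 _ hx).fun_add (hpdD 1 1 _ hx)) (hpdD 2 2 _ hx),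
      Htools.pd3_add (hpdD 0 0 _ hx) (hpdD 1 1 _ hx), hBval 0 k 0, hBval 1 k 1,
      hBval 2 k 2] at h0
    linarith [h0]
  have hR2'0 : fderiv ℝ (fderiv ℝ (fun z => v t z 0)) (emb p) (Pi.single 0 1) (Pi.single 0 1) + fderiv ℝ (fderiv ℝ (fun z => v t z 1)) (emb p) (Pi.single 0 1) (Pi.single 1 1) + fderiv ℝ (fderiv ℝ (fun z => v t z 2)) (emb p) (Pi.single 0 1) (Pi.single 2 1) = 0 := hR2' 0
  have hR2'1 : fderiv ℝ (fderiv ℝ (fun z => v t z 0)) (emb p) (Pi.single 0 1) (Pi.single 1 1) + fderiv ℝ (fderiv ℝ (fun z => v t z 1)) (emb p) (Pi.single 1 1) (Pi.single 1 1) + fderiv ℝ (fderiv ℝ (fun z => v t z 2)) (emb p) (Pi.single 1 1) (Pi.single 2 1) = 0 := by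
    have hk := hR2' 1
    rw [hMsym 0 (Pi.single 1 1) (Pi.single 0 1)] at hk
    exact hk
  -- ## Euler equations at the point (R1)
  have hR1_0 : deriv (fun s => v s (emb p) 0) t + (v t (emb p) 0 * pd3 0 (fun z => v t z 0) (emb p) + v t (emb p) 1 * pd3 1 (fun z => v t z 0) (emb p) + v t (emb p) 2 * pd3 2 (fun z => v t z 0) (emb p)) = -(pd3 0 (P t) (emb p)) := by
    have he := heuler t ht (emb p) hx 0
    rwa [Fin.sum_univ_three] at he
  have hR1_1 : deriv (fun s => v s (emb p) 1) t + (v t (emb p) 0 * pd3 0 (fun z => v t z 1) (emb p) + v t (emb p) 1 * pd3 1 (fun z => v t z 1) (emb p) + v t (emb p) 2 * pd3 2 (fun z => v t z 1) (emb p)) = -(pd3 1 (P t) (emb p)) := by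
    have he := heuler t ht (emb p) hx 1
    rwa [Fin.sum_univ_three] at he
  have hR1_2 : deriv (fun s => v s (emb p) 2) t + (v t (emb p) 0 * pd3 0 (fun z => v t z 2) (emb p) + v t (emb p) 1 * pd3 1 (fun z => v t z 2) (emb p) + v t (emb p) 2 * pd3 2 (fun z => v t z 2) (emb p)) = -(pd3 2 (P t) (emb p)) := by
    have he := heuler t ht (emb p) hx 2
    rwa [Fin.sum_univ_three] at he

  -- ## joint regularity in time and space
  have hJAt : ∀ i : Fin 3, ContDiffAt ℝ 2 (fun q : ℝ × V3 => v q.1 q.2 i) (t, emb p) :=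
    fun i => (hv i).contDiffAt (hOo.mem_nhds htx)
  have hJD : ∀ i : Fin 3, ∀ q ∈ Set.Ioo (0:ℝ) T ×ˢ Ω,
      DifferentiableAt ℝ (fun q : ℝ × V3 => v q.1 q.2 i) q :=
    fun i q hq => ((hv i).contDiffAt (hOo.mem_nhds hq)).differentiableAt two_ne_zero
  have hJfd : ∀ i : Fin 3,
      DifferentiableAt ℝ (fderiv ℝ (fun q : ℝ × V3 => v q.1 q.2 i)) (t, emb p) :=
    fun i => ((hJAt i).fderiv_right (m := 1) (by norm_num)).differentiableAt one_ne_zero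
  have hJsym : ∀ i : Fin 3, ∀ uu ww : ℝ × V3,
      fderiv ℝ (fderiv ℝ (fun q : ℝ × V3 => v q.1 q.2 i)) (t, emb p) uu ww
        = fderiv ℝ (fderiv ℝ (fun q : ℝ × V3 => v q.1 q.2 i)) (t, emb p) ww uu :=
    fun i => (hJAt i).isSymmSndFDerivAt (by simp [minSmoothness_of_isRCLikeNormedField])
  -- time slices
  have hslt : ∀ i : Fin 3, ∀ y ∈ Ω, HasDerivAt (fun s => v s y i)
      (fderiv ℝ (fun q : ℝ × V3 => v q.1 q.2 i) (t, y) ((1:ℝ), (0:V3))) t := by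
    intro i y hy
    have hcurve : HasDerivAt (fun s : ℝ => ((s, y) : ℝ × V3)) ((1:ℝ), (0:V3)) t :=
      (hasDerivAt_id t).prodMk (hasDerivAt_const t y)
    exact ((hJD i (t, y) ⟨ht, hy⟩).hasFDerivAt).comp_hasDerivAt t hcurve
  have hDtval : ∀ i : Fin 3, ∀ y ∈ Ω, deriv (fun s => v s y i) t
      = fderiv ℝ (fun q : ℝ × V3 => v q.1 q.2 i) (t, y) ((1:ℝ), (0:V3)) :=
    fun i y hy => (hslt i y hy).deriv
  -- space slices at time s
  have hsls : ∀ i j : Fin 3, ∀ s : ℝ, ∀ y : V3, (s, y) ∈ Set.Ioo (0:ℝ) T ×ˢ Ω →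
      pd3 j (fun z => v s z i) y
        = fderiv ℝ (fun q : ℝ × V3 => v q.1 q.2 i) (s, y) ((0:ℝ), Pi.single j 1) := by
    intro i j s y hq
    have hcur : HasFDerivAt (fun z : V3 => ((s, z) : ℝ × V3))
        ((0 : V3 →L[ℝ] ℝ).prod (ContinuousLinearMap.id ℝ V3)) y :=
      (hasFDerivAt_const s y).prodMk (hasFDerivAt_id y)
    have hcomp := ((hJD i (s, y) hq).hasFDerivAt).comp y hcur
    have hfeq : (fun z => v s z i)
        = (fun q : ℝ × V3 => v q.1 q.2 i) ∘ (fun z : V3 => ((s, z) : ℝ × V3)) := rfl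
    rw [hfeq, Htools.pd3_hasFDerivAt hcomp]
    simp
  -- mixed time-space derivatives
  have hDtD' : ∀ i j : Fin 3, HasDerivAt (fun s => pd3 j (fun z => v s z i) (emb p))
      (fderiv ℝ (fderiv ℝ (fun q : ℝ × V3 => v q.1 q.2 i)) (t, emb p) ((1:ℝ), (0:V3))
        ((0:ℝ), Pi.single j 1)) t := by
    intro i j
    have hev : (fun s => pd3 j (fun z => v s z i) (emb p))
        =ᶠ[nhds t] fun s => fderiv ℝ (fun q : ℝ × V3 => v q.1 q.2 i) (s, emb p)
          ((0:ℝ), Pi.single j 1) := by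
      have hmem : Set.Ioo (0:ℝ) T ∈ nhds t := isOpen_Ioo.mem_nhds ht
      filter_upwards [hmem] with s hs
      exact hsls i j s (emb p) ⟨hs, hx⟩
    have hc1 : HasFDerivAt (fun q : ℝ × V3 =>
        fderiv ℝ (fun q' : ℝ × V3 => v q'.1 q'.2 i) q ((0:ℝ), Pi.single j 1))
        (((fderiv ℝ (fun q : ℝ × V3 => v q.1 q.2 i) (t, emb p)).comp
            (0 : ℝ × V3 →L[ℝ] ℝ × V3))
          + (fderiv ℝ (fderiv ℝ (fun q : ℝ × V3 => v q.1 q.2 i)) (t, emb p)).flip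
              ((0:ℝ), Pi.single j 1)) (t, emb p) :=
      (hJfd i).hasFDerivAt.clm_apply (hasFDerivAt_const _ _)
    have hcurve : HasDerivAt (fun s : ℝ => ((s, emb p) : ℝ × V3)) ((1:ℝ), (0:V3)) t :=
      (hasDerivAt_id t).prodMk (hasDerivAt_const t (emb p))
    have hder := hc1.comp_hasDerivAt t hcurve
    have hder2 : HasDerivAt (fun s => fderiv ℝ (fun q : ℝ × V3 => v q.1 q.2 i) (s, emb p)
        ((0:ℝ), Pi.single j 1))
        (fderiv ℝ (fderiv ℝ (fun q : ℝ × V3 => v q.1 q.2 i)) (t, emb p) ((1:ℝ), (0:V3))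
          ((0:ℝ), Pi.single j 1)) t := by
      refine hder.congr_deriv ?_
      simp
    exact hder2.congr_of_eventuallyEq hev
  -- the time derivative of the velocity, as a function of space
  have hgd : ∀ i : Fin 3,
      DifferentiableAt ℝ (fun y => deriv (fun s => v s y i) t) (emb p) ∧
      ∀ j : Fin 3, pd3 j (fun y => deriv (fun s => v s y i) t) (emb p)
        = fderiv ℝ (fderiv ℝ (fun q : ℝ × V3 => v q.1 q.2 i)) (t, emb p)
            ((0:ℝ), Pi.single j 1) ((1:ℝ), (0:V3)) := by
    intro i
    have hfun : (fun y => deriv (fun s => v s y i) t)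
        =ᶠ[nhds (emb p)] fun y => fderiv ℝ (fun q : ℝ × V3 => v q.1 q.2 i) (t, y)
          ((1:ℝ), (0:V3)) := by
      filter_upwards [hΩopen.mem_nhds hx] with y hy
      exact hDtval i y hy
    have hcur : HasFDerivAt (fun z : V3 => ((t, z) : ℝ × V3))
        ((0 : V3 →L[ℝ] ℝ).prod (ContinuousLinearMap.id ℝ V3)) (emb p) :=
      (hasFDerivAt_const t _).prodMk (hasFDerivAt_id _)
    have hcmp : HasFDerivAt (fun y : V3 => fderiv ℝ (fun q : ℝ × V3 => v q.1 q.2 i) (t, y))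
        ((fderiv ℝ (fderiv ℝ (fun q : ℝ × V3 => v q.1 q.2 i)) (t, emb p)).comp
          ((0 : V3 →L[ℝ] ℝ).prod (ContinuousLinearMap.id ℝ V3))) (emb p) :=
      ((hJfd i).hasFDerivAt).comp _ hcur
    have happ := hcmp.clm_apply (hasFDerivAt_const ((1:ℝ), (0:V3)) _)
    constructor
    · exact happ.differentiableAt.congr_of_eventuallyEq hfun
    · intro j
      rw [Htools.pd3_congr hfun j, Htools.pd3_hasFDerivAt happ]
      simp
  -- ## differentiated Euler equations and pressure symmetry
  set Pdif : Fin 3 → V3 → ℝ := fun i y =>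
    -(deriv (fun s => v s y i) t) - (v t y 0 * pd3 0 (fun z => v t z i) y
      + v t y 1 * pd3 1 (fun z => v t z i) y + v t y 2 * pd3 2 (fun z => v t z i) y)
    with hPdifdef
  have hEulP : ∀ y ∈ Ω, ∀ i : Fin 3, pd3 i (P t) y = Pdif i y := by
    intro y hy i
    have he := heuler t ht y hy i
    rw [Fin.sum_univ_three] at he
    simp only [hPdifdef]
    linarith [he]
  have hPdifD : ∀ i : Fin 3, DifferentiableAt ℝ (Pdif i) (emb p) := by
    intro i
    rw [hPdifdef]
    exact ((hgd i).1.fun_neg).fun_sub ((((hvD 0 _ hx).fun_mul (hpdD 0 i _ hx)).fun_add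
      ((hvD 1 _ hx).fun_mul (hpdD 1 i _ hx))).fun_add ((hvD 2 _ hx).fun_mul (hpdD 2 i _ hx)))
  have hPsym : pd3 0 (Pdif 1) (emb p) = pd3 1 (Pdif 0) (emb p) := by
    have hev : ∀ᶠ y in nhds (emb p), HasFDerivAt (P t)
        ((Pdif 0 y • (ContinuousLinearMap.proj (R := ℝ) (φ := fun _ : Fin 3 => ℝ) 0)
          + Pdif 1 y • (ContinuousLinearMap.proj (R := ℝ) (φ := fun _ : Fin 3 => ℝ) 1))
          + Pdif 2 y • (ContinuousLinearMap.proj (R := ℝ) (φ := fun _ : Fin 3 => ℝ) 2)) y := by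
      filter_upwards [hΩopen.mem_nhds hx] with y hy
      have hdy := (hPdV y hy).hasFDerivAt
      have heq : fderiv ℝ (P t) y
          = (Pdif 0 y • (ContinuousLinearMap.proj (R := ℝ) (φ := fun _ : Fin 3 => ℝ) 0)
            + Pdif 1 y • (ContinuousLinearMap.proj (R := ℝ) (φ := fun _ : Fin 3 => ℝ) 1))
            + Pdif 2 y • (ContinuousLinearMap.proj (R := ℝ) (φ := fun _ : Fin 3 => ℝ) 2) := by
        apply Htools.clm3_ext
        · rw [show fderiv ℝ (P t) y (Pi.single 0 1) = pd3 0 (P t) y from rfl, hEulP y hy 0]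
          simp [Pi.single_apply]
        · rw [show fderiv ℝ (P t) y (Pi.single 1 1) = pd3 1 (P t) y from rfl, hEulP y hy 1]
          simp [Pi.single_apply]
        · rw [show fderiv ℝ (P t) y (Pi.single 2 1) = pd3 2 (P t) y from rfl, hEulP y hy 2]
          simp [Pi.single_apply]
      rw [← heq]
      exact hdy
    have hfd : HasFDerivAt (fun y =>
        (Pdif 0 y • (ContinuousLinearMap.proj (R := ℝ) (φ := fun _ : Fin 3 => ℝ) 0)
          + Pdif 1 y • (ContinuousLinearMap.proj (R := ℝ) (φ := fun _ : Fin 3 => ℝ) 1))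
          + Pdif 2 y • (ContinuousLinearMap.proj (R := ℝ) (φ := fun _ : Fin 3 => ℝ) 2))
        (((fderiv ℝ (Pdif 0) (emb p)).smulRight
            (ContinuousLinearMap.proj (R := ℝ) (φ := fun _ : Fin 3 => ℝ) 0)
          + (fderiv ℝ (Pdif 1) (emb p)).smulRight
            (ContinuousLinearMap.proj (R := ℝ) (φ := fun _ : Fin 3 => ℝ) 1))
          + (fderiv ℝ (Pdif 2) (emb p)).smulRight
            (ContinuousLinearMap.proj (R := ℝ) (φ := fun _ : Fin 3 => ℝ) 2)) (emb p) :=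
      (((hPdifD 0).hasFDerivAt.smul_const (ContinuousLinearMap.proj (R := ℝ) (φ := fun _ : Fin 3 => ℝ) 0)).fun_add
        ((hPdifD 1).hasFDerivAt.smul_const (ContinuousLinearMap.proj (R := ℝ) (φ := fun _ : Fin 3 => ℝ) 1))).fun_add ((hPdifD 2).hasFDerivAt.smul_const (ContinuousLinearMap.proj (R := ℝ) (φ := fun _ : Fin 3 => ℝ) 2))
    have hsym := second_derivative_symmetric_of_eventually hev hfd
      (Pi.single 0 1) (Pi.single 1 1)
    simp only [ContinuousLinearMap.add_apply, ContinuousLinearMap.smulRight_apply,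
      ContinuousLinearMap.smul_apply, ContinuousLinearMap.proj_apply, smul_eq_mul,
      Pi.single_eq_same, Pi.single_eq_of_ne (by decide : (0:Fin 3) ≠ 1),
      Pi.single_eq_of_ne (by decide : (2:Fin 3) ≠ 1),
      Pi.single_eq_of_ne (by decide : (1:Fin 3) ≠ 0),
      Pi.single_eq_of_ne (by decide : (2:Fin 3) ≠ 0), mul_zero, mul_one, zero_add,
      add_zero] at hsym
    unfold pd3
    linarith [hsym]

  -- ## the vorticity transport relation (R6)
  have hgfun : ∀ i : Fin 3, (fun y => deriv (fun s => v s y i) t)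
      = fun y => -(Pdif i y) - (v t y 0 * pd3 0 (fun z => v t z i) y
        + v t y 1 * pd3 1 (fun z => v t z i) y + v t y 2 * pd3 2 (fun z => v t z i) y) := by
    intro i
    funext y
    simp only [hPdifdef]
    ring
  have hpdg01 : pd3 0 (fun y => deriv (fun s => v s y 1) t) (emb p)
      = -(pd3 0 (Pdif 1) (emb p)) - ((v t (emb p) 0 * fderiv ℝ (fderiv ℝ (fun z => v t z 1)) (emb p) (Pi.single 0 1) (Pi.single 0 1) + pd3 0 (fun z => v t z 0) (emb p) * pd3 0 (fun z => v t z 1) (emb p))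
        + (v t (emb p) 1 * fderiv ℝ (fderiv ℝ (fun z => v t z 1)) (emb p) (Pi.single 0 1) (Pi.single 1 1) + pd3 0 (fun z => v t z 1) (emb p) * pd3 1 (fun z => v t z 1) (emb p)) + (v t (emb p) 2 * fderiv ℝ (fderiv ℝ (fun z => v t z 1)) (emb p) (Pi.single 0 1) (Pi.single 2 1) + pd3 0 (fun z => v t z 2) (emb p) * pd3 2 (fun z => v t z 1) (emb p))) := by
    rw [hgfun 1,
      Htools.pd3_sub ((hPdifD 1).fun_neg) ((((hvD 0 _ hx).fun_mul (hpdD 0 1 _ hx)).fun_add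
        ((hvD 1 _ hx).fun_mul (hpdD 1 1 _ hx))).fun_add ((hvD 2 _ hx).fun_mul (hpdD 2 1 _ hx))),
      Htools.pd3_neg,
      Htools.pd3_add (((hvD 0 _ hx).fun_mul (hpdD 0 1 _ hx)).fun_add
        ((hvD 1 _ hx).fun_mul (hpdD 1 1 _ hx))) ((hvD 2 _ hx).fun_mul (hpdD 2 1 _ hx)),
      Htools.pd3_add ((hvD 0 _ hx).fun_mul (hpdD 0 1 _ hx)) ((hvD 1 _ hx).fun_mul (hpdD 1 1 _ hx)),
      Htools.pd3_mul (hvD 0 _ hx) (hpdD 0 1 _ hx),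
      Htools.pd3_mul (hvD 1 _ hx) (hpdD 1 1 _ hx),
      Htools.pd3_mul (hvD 2 _ hx) (hpdD 2 1 _ hx),
      hBval 1 0 0, hBval 1 0 1, hBval 1 0 2]
  have hpdg10 : pd3 1 (fun y => deriv (fun s => v s y 0) t) (emb p)
      = -(pd3 1 (Pdif 0) (emb p)) - ((v t (emb p) 0 * fderiv ℝ (fderiv ℝ (fun z => v t z 0)) (emb p) (Pi.single 1 1) (Pi.single 0 1) + pd3 1 (fun z => v t z 0) (emb p) * pd3 0 (fun z => v t z 0) (emb p))
        + (v t (emb p) 1 * fderiv ℝ (fderiv ℝ (fun z => v t z 0)) (emb p) (Pi.single 1 1) (Pi.single 1 1) + pd3 1 (fun z => v t z 1) (emb p) * pd3 1 (fun z => v t z 0) (emb p)) + (v t (emb p) 2 * fderiv ℝ (fderiv ℝ (fun z => v t z 0)) (emb p) (Pi.single 1 1) (Pi.single 2 1) + pd3 1 (fun z => v t z 2) (emb p) * pd3 2 (fun z => v t z 0) (emb p))) := by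
    rw [hgfun 0,
      Htools.pd3_sub ((hPdifD 0).fun_neg) ((((hvD 0 _ hx).fun_mul (hpdD 0 0 _ hx)).fun_add
        ((hvD 1 _ hx).fun_mul (hpdD 1 0 _ hx))).fun_add ((hvD 2 _ hx).fun_mul (hpdD 2 0 _ hx))),
      Htools.pd3_neg,
      Htools.pd3_add (((hvD 0 _ hx).fun_mul (hpdD 0 0 _ hx)).fun_add
        ((hvD 1 _ hx).fun_mul (hpdD 1 0 _ hx))) ((hvD 2 _ hx).fun_mul (hpdD 2 0 _ hx)),
      Htools.pd3_add ((hvD 0 _ hx).fun_mul (hpdD 0 0 _ hx)) ((hvD 1 _ hx).fun_mul (hpdD 1 0 _ hx)),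
      Htools.pd3_mul (hvD 0 _ hx) (hpdD 0 0 _ hx),
      Htools.pd3_mul (hvD 1 _ hx) (hpdD 1 0 _ hx),
      Htools.pd3_mul (hvD 2 _ hx) (hpdD 2 0 _ hx),
      hBval 0 1 0, hBval 0 1 1, hBval 0 1 2]
  have e01 : deriv (fun s => pd3 0 (fun z => v s z 1) (emb p)) t = -(pd3 0 (Pdif 1) (emb p)) - ((v t (emb p) 0 * fderiv ℝ (fderiv ℝ (fun z => v t z 1)) (emb p) (Pi.single 0 1) (Pi.single 0 1) + pd3 0 (fun z => v t z 0) (emb p) * pd3 0 (fun z => v t z 1) (emb p))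
      + (v t (emb p) 1 * fderiv ℝ (fderiv ℝ (fun z => v t z 1)) (emb p) (Pi.single 0 1) (Pi.single 1 1) + pd3 0 (fun z => v t z 1) (emb p) * pd3 1 (fun z => v t z 1) (emb p)) + (v t (emb p) 2 * fderiv ℝ (fderiv ℝ (fun z => v t z 1)) (emb p) (Pi.single 0 1) (Pi.single 2 1) + pd3 0 (fun z => v t z 2) (emb p) * pd3 2 (fun z => v t z 1) (emb p))) := by
    rw [(hDtD' 1 0).deriv, hJsym 1 ((1:ℝ), (0:V3)) ((0:ℝ), Pi.single 0 1), ← (hgd 1).2 0]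
    exact hpdg01
  have e10 : deriv (fun s => pd3 1 (fun z => v s z 0) (emb p)) t = -(pd3 1 (Pdif 0) (emb p)) - ((v t (emb p) 0 * fderiv ℝ (fderiv ℝ (fun z => v t z 0)) (emb p) (Pi.single 1 1) (Pi.single 0 1) + pd3 1 (fun z => v t z 0) (emb p) * pd3 0 (fun z => v t z 0) (emb p))
      + (v t (emb p) 1 * fderiv ℝ (fderiv ℝ (fun z => v t z 0)) (emb p) (Pi.single 1 1) (Pi.single 1 1) + pd3 1 (fun z => v t z 1) (emb p) * pd3 1 (fun z => v t z 0) (emb p)) + (v t (emb p) 2 * fderiv ℝ (fderiv ℝ (fun z => v t z 0)) (emb p) (Pi.single 1 1) (Pi.single 2 1) + pd3 1 (fun z => v t z 2) (emb p) * pd3 2 (fun z => v t z 0) (emb p))) := by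
    rw [(hDtD' 0 1).deriv, hJsym 0 ((1:ℝ), (0:V3)) ((0:ℝ), Pi.single 1 1), ← (hgd 0).2 1]
    exact hpdg10
  rw [hMsym 0 (Pi.single 1 1) (Pi.single 0 1)] at e10
  have hR6 : deriv (fun s => pd3 0 (fun z => v s z 1) (emb p)) t - deriv (fun s => pd3 1 (fun z => v s z 0) (emb p)) t + ((pd3 0 (fun z => v t z 0) (emb p) * pd3 0 (fun z => v t z 1) (emb p) + pd3 0 (fun z => v t z 1) (emb p) * pd3 1 (fun z => v t z 1) (emb p) + pd3 0 (fun z => v t z 2) (emb p) * pd3 2 (fun z => v t z 1) (emb p))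
      + (v t (emb p) 0 * fderiv ℝ (fderiv ℝ (fun z => v t z 1)) (emb p) (Pi.single 0 1) (Pi.single 0 1) + v t (emb p) 1 * fderiv ℝ (fderiv ℝ (fun z => v t z 1)) (emb p) (Pi.single 0 1) (Pi.single 1 1) + v t (emb p) 2 * fderiv ℝ (fderiv ℝ (fun z => v t z 1)) (emb p) (Pi.single 0 1) (Pi.single 2 1))
      - (pd3 1 (fun z => v t z 0) (emb p) * pd3 0 (fun z => v t z 0) (emb p) + pd3 1 (fun z => v t z 1) (emb p) * pd3 1 (fun z => v t z 0) (emb p) + pd3 1 (fun z => v t z 2) (emb p) * pd3 2 (fun z => v t z 0) (emb p))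
      - (v t (emb p) 0 * fderiv ℝ (fderiv ℝ (fun z => v t z 0)) (emb p) (Pi.single 0 1) (Pi.single 1 1) + v t (emb p) 1 * fderiv ℝ (fderiv ℝ (fun z => v t z 0)) (emb p) (Pi.single 1 1) (Pi.single 1 1) + v t (emb p) 2 * fderiv ℝ (fderiv ℝ (fun z => v t z 0)) (emb p) (Pi.single 1 1) (Pi.single 2 1))) = 0 := by
    linarith [e01, e10, hPsym]

  -- ## explicit closed forms
  have hswirl : ∀ (w : V3 → V3) (y : V3),
      swirl h w y = y 1 * w y 0 - y 0 * w y 1 + h * w y 2 := by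
    intro w y
    simp only [swirl, xiVec, Fin.sum_univ_three, Htools.vec3_0, Htools.vec3_1, Htools.vec3_2]
    ring
  have horth0 : ∀ y : V3, orthPart h (v t) y 0
      = v t y 0 - (y 1 * v t y 0 - y 0 * v t y 1 + h * v t y 2) * y 1
          / (h ^ 2 + y 0 ^ 2 + y 1 ^ 2) := by
    intro y
    simp only [orthPart, xiNormSq, xiVec, Htools.vec3_0]
    rw [hswirl (v t) y]
  have horth1 : ∀ y : V3, orthPart h (v t) y 1
      = v t y 1 + (y 1 * v t y 0 - y 0 * v t y 1 + h * v t y 2) * y 0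
          / (h ^ 2 + y 0 ^ 2 + y 1 ^ 2) := by
    intro y
    simp only [orthPart, xiNormSq, xiVec, Htools.vec3_1]
    rw [hswirl (v t) y]
    ring
  -- ## the stream function derivatives, solved from the hypothesis
  have hsolve : ∀ q ∈ D,
      pd2 0 (φ t) q = (q 0 * q 1 * orthPart h (v t) (emb q) 0
        - (h ^ 2 + q 0 ^ 2) * orthPart h (v t) (emb q) 1) / h ^ 2
      ∧ pd2 1 (φ t) q = ((h ^ 2 + q 1 ^ 2) * orthPart h (v t) (emb q) 0
        - q 0 * q 1 * orthPart h (v t) (emb q) 1) / h ^ 2 := by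
    intro q hq
    obtain ⟨e0, e1⟩ := hφ t ht q hq
    have hNq := hNne2 q
    have e0' : orthPart h (v t) (emb q) 0 * (h ^ 2 + q 0 ^ 2 + q 1 ^ 2)
        = -(q 0 * q 1) * pd2 0 (φ t) q + (h ^ 2 + q 0 ^ 2) * pd2 1 (φ t) q := by
      rw [e0]; field_simp
    have e1' : orthPart h (v t) (emb q) 1 * (h ^ 2 + q 0 ^ 2 + q 1 ^ 2)
        = -(h ^ 2 + q 1 ^ 2) * pd2 0 (φ t) q + q 0 * q 1 * pd2 1 (φ t) q := by
      rw [e1]; field_simp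
    constructor
    · rw [eq_div_iff hh2]
      apply mul_right_cancel₀ hNq
      linear_combination (-(q 0 * q 1)) * e0' + (h ^ 2 + q 0 ^ 2) * e1'
    · rw [eq_div_iff hh2]
      apply mul_right_cancel₀ hNq
      linear_combination (-(h ^ 2 + q 1 ^ 2)) * e0' + q 0 * q 1 * e1'
  -- ## differentiability of the auxiliary 3D functions
  have hdS : DifferentiableAt ℝ (fun y => y 1 * v t y 0 - y 0 * v t y 1 + h * v t y 2)
      (emb p) :=
    ((Htools.diff_coord.fun_mul (hvD 0 _ hx)).fun_sub (Htools.diff_coord.fun_mul (hvD 1 _ hx))).fun_add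
      ((differentiableAt_const h).fun_mul (hvD 2 _ hx))
  have hdN : DifferentiableAt ℝ (fun y : V3 => h ^ 2 + y 0 ^ 2 + y 1 ^ 2) (emb p) :=
    Htools.diff_quadN _
  -- ## transported swirl derivatives
  have hSc : (fun q : V2 => swirl h (v t) (emb q))
      = fun q => (fun y => y 1 * v t y 0 - y 0 * v t y 1 + h * v t y 2) (emb q) := by
    funext q; exact hswirl (v t) (emb q)
  have hs0 : pd2 0 (fun q => swirl h (v t) (emb q)) p
      = p 1 * pd3 0 (fun z => v t z 0) (emb p) - p 0 * pd3 0 (fun z => v t z 1) (emb p) + h * pd3 0 (fun z => v t z 2) (emb p) - v t (emb p) 1 := by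
    rw [hSc, Htools.pd2_comp_emb0 hdS,
      Htools.pd3_helForm0 (hvD 0 _ hx) (hvD 1 _ hx) (hvD 2 _ hx) h]
    simp only [Htools.emb_zero, Htools.emb_one]
    ring
  have hs1 : pd2 1 (fun q => swirl h (v t) (emb q)) p
      = p 1 * pd3 1 (fun z => v t z 0) (emb p) - p 0 * pd3 1 (fun z => v t z 1) (emb p) + h * pd3 1 (fun z => v t z 2) (emb p) + v t (emb p) 0 := by
    rw [hSc, Htools.pd2_comp_emb1 hdS,
      Htools.pd3_helForm1 (hvD 0 _ hx) (hvD 1 _ hx) (hvD 2 _ hx) h]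
    simp only [Htools.emb_zero, Htools.emb_one]
    ring
  have hSval : swirl h (v t) (emb p) = p 1 * v t (emb p) 0 - p 0 * v t (emb p) 1 + h * v t (emb p) 2 := by
    rw [hswirl (v t) (emb p)]
    simp only [Htools.emb_zero, Htools.emb_one]
  -- ## transported vorticity derivatives
  have hw3fun : (fun q : V2 => w3 (v t) (emb q))
      = fun q => (fun y => pd3 0 (fun z => v t z 1) y - pd3 1 (fun z => v t z 0) y)
        (emb q) := rfl
  have hdw3 : DifferentiableAt ℝ
      (fun y => pd3 0 (fun z => v t z 1) y - pd3 1 (fun z => v t z 0) y) (emb p) :=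
    (hpdD 0 1 _ hx).fun_sub (hpdD 1 0 _ hx)
  have hr0 : pd2 0 (fun q => w3 (v t) (emb q)) p = fderiv ℝ (fderiv ℝ (fun z => v t z 1)) (emb p) (Pi.single 0 1) (Pi.single 0 1) - fderiv ℝ (fderiv ℝ (fun z => v t z 0)) (emb p) (Pi.single 0 1) (Pi.single 1 1) := by
    rw [hw3fun, Htools.pd2_comp_emb0 hdw3,
      Htools.pd3_sub (hpdD 0 1 _ hx) (hpdD 1 0 _ hx), hBval 1 0 0, hBval 0 0 1]
  have hr1 : pd2 1 (fun q => w3 (v t) (emb q)) p = fderiv ℝ (fderiv ℝ (fun z => v t z 1)) (emb p) (Pi.single 0 1) (Pi.single 1 1) - fderiv ℝ (fderiv ℝ (fun z => v t z 0)) (emb p) (Pi.single 1 1) (Pi.single 1 1) := by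
    rw [hw3fun, Htools.pd2_comp_emb1 hdw3,
      Htools.pd3_sub (hpdD 0 1 _ hx) (hpdD 1 0 _ hx), hBval 1 1 0, hBval 0 1 1,
      hMsym 1 (Pi.single 1 1) (Pi.single 0 1)]
  -- ## the transported quotient function
  have hdv2h : DifferentiableAt ℝ (fun y : V3 => -(v t y 2) / h) (emb p) :=
    Htools.diff_div_const (DifferentiableAt.fun_neg (hvD 2 (emb p) hx)) h
  have hdSN : DifferentiableAt ℝ (fun y : V3 =>
      (y 1 * v t y 0 - y 0 * v t y 1 + h * v t y 2) / (h ^ 2 + y 0 ^ 2 + y 1 ^ 2)) (emb p) := by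
    exact Htools.diff_div hdS hdN (hNne3 (emb p))
  have hdF1 : DifferentiableAt ℝ (fun y => -(v t y 2) / h
      + (y 1 * v t y 0 - y 0 * v t y 1 + h * v t y 2) / (h ^ 2 + y 0 ^ 2 + y 1 ^ 2))
      (emb p) := by
    exact hdv2h.fun_add hdSN
  have hquot : (fun q : V2 => (q 0 * pd2 0 (φ t) q + q 1 * pd2 1 (φ t) q)
        / (h ^ 2 + q 0 ^ 2 + q 1 ^ 2))
      =ᶠ[nhds p] fun q => (fun y => -(v t y 2) / h
        + (y 1 * v t y 0 - y 0 * v t y 1 + h * v t y 2) / (h ^ 2 + y 0 ^ 2 + y 1 ^ 2))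
          (emb q) := by
    filter_upwards [hDo.mem_nhds hp] with q hq
    rw [(hsolve q hq).1, (hsolve q hq).2, horth0 (emb q), horth1 (emb q)]
    simp only [Htools.emb_zero, Htools.emb_one, Htools.emb_two]
    field_simp
    ring
  have ht0 : pd2 0 (fun q : V2 => (q 0 * pd2 0 (φ t) q + q 1 * pd2 1 (φ t) q)
        / (h ^ 2 + q 0 ^ 2 + q 1 ^ 2)) p
      = -(pd3 0 (fun z => v t z 2) (emb p)) / h + (pd2 0 (fun q => swirl h (v t) (emb q)) p) / (h ^ 2 + p 0 ^ 2 + p 1 ^ 2)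
        - 2 * p 0 * swirl h (v t) (emb p) / (h ^ 2 + p 0 ^ 2 + p 1 ^ 2) ^ 2 := by
    rw [Htools.pd2_congr hquot 0, Htools.pd2_comp_emb0 hdF1,
      Htools.pd3_add hdv2h hdSN,
      Htools.pd3_div ((hvD 2 _ hx).fun_neg) (differentiableAt_const h) (by simpa using hh0),
      Htools.pd3_neg, Htools.pd3_const,
      Htools.pd3_div hdS hdN (hNne3 (emb p)),
      Htools.pd3_helForm0 (hvD 0 _ hx) (hvD 1 _ hx) (hvD 2 _ hx) h, Htools.pd3_quadN0,
      hs0, hSval]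
    simp only [Htools.emb_zero, Htools.emb_one]
    field_simp
    ring
  have ht1 : pd2 1 (fun q : V2 => (q 0 * pd2 0 (φ t) q + q 1 * pd2 1 (φ t) q)
        / (h ^ 2 + q 0 ^ 2 + q 1 ^ 2)) p
      = -(pd3 1 (fun z => v t z 2) (emb p)) / h + (pd2 1 (fun q => swirl h (v t) (emb q)) p) / (h ^ 2 + p 0 ^ 2 + p 1 ^ 2)
        - 2 * p 1 * swirl h (v t) (emb p) / (h ^ 2 + p 0 ^ 2 + p 1 ^ 2) ^ 2 := by
    rw [Htools.pd2_congr hquot 1, Htools.pd2_comp_emb1 hdF1,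
      Htools.pd3_add hdv2h hdSN,
      Htools.pd3_div ((hvD 2 _ hx).fun_neg) (differentiableAt_const h) (by simpa using hh0),
      Htools.pd3_neg, Htools.pd3_const,
      Htools.pd3_div hdS hdN (hNne3 (emb p)),
      Htools.pd3_helForm1 (hvD 0 _ hx) (hvD 1 _ hx) (hvD 2 _ hx) h, Htools.pd3_quadN1,
      hs1, hSval]
    simp only [Htools.emb_zero, Htools.emb_one]
    field_simp
    ring

  -- ## the elliptic operator identity pieces
  have hdSy1 : DifferentiableAt ℝ
      (fun y : V3 => (y 1 * v t y 0 - y 0 * v t y 1 + h * v t y 2) * y 1) (emb p) :=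
    hdS.fun_mul Htools.diff_coord
  have hdSy0 : DifferentiableAt ℝ
      (fun y : V3 => (y 1 * v t y 0 - y 0 * v t y 1 + h * v t y 2) * y 0) (emb p) :=
    hdS.fun_mul Htools.diff_coord
  have hdq0 : DifferentiableAt ℝ (fun y : V3 =>
      (y 1 * v t y 0 - y 0 * v t y 1 + h * v t y 2) * y 1 / (h ^ 2 + y 0 ^ 2 + y 1 ^ 2))
      (emb p) := by
    exact Htools.diff_div hdSy1 hdN (hNne3 (emb p))
  have hdq1 : DifferentiableAt ℝ (fun y : V3 =>
      (y 1 * v t y 0 - y 0 * v t y 1 + h * v t y 2) * y 0 / (h ^ 2 + y 0 ^ 2 + y 1 ^ 2))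
      (emb p) := by
    exact Htools.diff_div hdSy0 hdN (hNne3 (emb p))
  have hdu0 : DifferentiableAt ℝ (fun y : V3 => v t y 0
      - (y 1 * v t y 0 - y 0 * v t y 1 + h * v t y 2) * y 1 / (h ^ 2 + y 0 ^ 2 + y 1 ^ 2))
      (emb p) := (hvD 0 _ hx).fun_sub hdq0
  have hdu1 : DifferentiableAt ℝ (fun y : V3 => v t y 1
      + (y 1 * v t y 0 - y 0 * v t y 1 + h * v t y 2) * y 0 / (h ^ 2 + y 0 ^ 2 + y 1 ^ 2))
      (emb p) := (hvD 1 _ hx).fun_add hdq1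
  have hG1 : (fun q : V2 => (-(q 0 * q 1) * pd2 0 (φ t) q + (h ^ 2 + q 0 ^ 2) * pd2 1 (φ t) q)
        / (h ^ 2 + q 0 ^ 2 + q 1 ^ 2))
      =ᶠ[nhds p] fun q => (fun y => v t y 0
        - (y 1 * v t y 0 - y 0 * v t y 1 + h * v t y 2) * y 1 / (h ^ 2 + y 0 ^ 2 + y 1 ^ 2))
          (emb q) := by
    filter_upwards [hDo.mem_nhds hp] with q hq
    have he := (hφ t ht q hq).1
    rw [← he, horth0 (emb q)]
  have hpd2G1 : pd2 1 (fun q : V2 =>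
        (-(q 0 * q 1) * pd2 0 (φ t) q + (h ^ 2 + q 0 ^ 2) * pd2 1 (φ t) q)
          / (h ^ 2 + q 0 ^ 2 + q 1 ^ 2)) p
      = pd3 1 (fun y => v t y 0
        - (y 1 * v t y 0 - y 0 * v t y 1 + h * v t y 2) * y 1 / (h ^ 2 + y 0 ^ 2 + y 1 ^ 2))
          (emb p) := by
    rw [Htools.pd2_congr hG1 1]
    exact Htools.pd2_comp_emb1 hdu0
  have hG0 : (fun q : V2 => ((h ^ 2 + q 1 ^ 2) * pd2 0 (φ t) q - q 0 * q 1 * pd2 1 (φ t) q)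
        / (h ^ 2 + q 0 ^ 2 + q 1 ^ 2))
      =ᶠ[nhds p] fun q => (fun y => -(v t y 1
        + (y 1 * v t y 0 - y 0 * v t y 1 + h * v t y 2) * y 0 / (h ^ 2 + y 0 ^ 2 + y 1 ^ 2)))
          (emb q) := by
    filter_upwards [hDo.mem_nhds hp] with q hq
    have he := (hφ t ht q hq).2
    have h2 : ((h ^ 2 + q 1 ^ 2) * pd2 0 (φ t) q - q 0 * q 1 * pd2 1 (φ t) q)
        / (h ^ 2 + q 0 ^ 2 + q 1 ^ 2)
        = -((-(h ^ 2 + q 1 ^ 2) * pd2 0 (φ t) q + q 0 * q 1 * pd2 1 (φ t) q)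
          / (h ^ 2 + q 0 ^ 2 + q 1 ^ 2)) := by ring
    rw [h2, ← he, horth1 (emb q)]
  have hpd2G0 : pd2 0 (fun q : V2 =>
        ((h ^ 2 + q 1 ^ 2) * pd2 0 (φ t) q - q 0 * q 1 * pd2 1 (φ t) q)
          / (h ^ 2 + q 0 ^ 2 + q 1 ^ 2)) p
      = -(pd3 0 (fun y => v t y 1
        + (y 1 * v t y 0 - y 0 * v t y 1 + h * v t y 2) * y 0 / (h ^ 2 + y 0 ^ 2 + y 1 ^ 2))
          (emb p)) := by
    rw [Htools.pd2_congr hG0 0, Htools.pd2_comp_emb0 (DifferentiableAt.fun_neg hdu1)]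
    exact Htools.pd3_neg 0
  have hLKval : LK h (φ t) p
      = (pd3 0 (fun z => v t z 1) (emb p) + (p 0 * pd2 0 (fun q => swirl h (v t) (emb q)) p + swirl h (v t) (emb p))
          / (h ^ 2 + p 0 ^ 2 + p 1 ^ 2)
          - 2 * p 0 ^ 2 * swirl h (v t) (emb p) / (h ^ 2 + p 0 ^ 2 + p 1 ^ 2) ^ 2)
        - (pd3 1 (fun z => v t z 0) (emb p) - ((p 1 * pd2 1 (fun q => swirl h (v t) (emb q)) p + swirl h (v t) (emb p))
          / (h ^ 2 + p 0 ^ 2 + p 1 ^ 2)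
          - 2 * p 1 ^ 2 * swirl h (v t) (emb p) / (h ^ 2 + p 0 ^ 2 + p 1 ^ 2) ^ 2)) := by
    unfold LK
    rw [hpd2G0, hpd2G1,
      Htools.pd3_add (hvD 1 _ hx) hdq1,
      Htools.pd3_div hdSy0 hdN (hNne3 (emb p)),
      Htools.pd3_mul hdS Htools.diff_coord,
      Htools.pd3_helForm0 (hvD 0 _ hx) (hvD 1 _ hx) (hvD 2 _ hx) h,
      Htools.pd3_coord00, Htools.pd3_quadN0,
      Htools.pd3_sub (hvD 0 _ hx) hdq0,
      Htools.pd3_div hdSy1 hdN (hNne3 (emb p)),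
      Htools.pd3_mul hdS Htools.diff_coord,
      Htools.pd3_helForm1 (hvD 0 _ hx) (hvD 1 _ hx) (hvD 2 _ hx) h,
      Htools.pd3_coord11, Htools.pd3_quadN1,
      hs0, hs1, hSval]
    simp only [Htools.emb_zero, Htools.emb_one]
    field_simp
    ring
  -- ## the time derivative of the swirl and vorticity restrictions
  have hswfun : (fun s => swirl h (v s) (emb p)) = fun s => emb p 1 * v s (emb p) 0
      - emb p 0 * v s (emb p) 1 + h * v s (emb p) 2 := by
    funext s; rw [hswirl (v s) (emb p)]
  have hdd := (((hslt 0 _ hx).const_mul (emb p 1)).fun_sub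
    ((hslt 1 _ hx).const_mul (emb p 0))).fun_add ((hslt 2 _ hx).const_mul h)
  have hderS : deriv (fun s => swirl h (v s) (emb p)) t
      = p 1 * deriv (fun s => v s (emb p) 0) t - p 0 * deriv (fun s => v s (emb p) 1) t + h * deriv (fun s => v s (emb p) 2) t := by
    rw [hswfun, hdd.deriv, hDtval 0 _ hx, hDtval 1 _ hx, hDtval 2 _ hx]
    simp only [Htools.emb_zero, Htools.emb_one]
  have hderW : deriv (fun s => w3 (v s) (emb p)) t = deriv (fun s => pd3 0 (fun z => v s z 1) (emb p)) t - deriv (fun s => pd3 1 (fun z => v s z 0) (emb p)) t := by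
    have hfun : (fun s => w3 (v s) (emb p)) = fun s => pd3 0 (fun z => v s z 1) (emb p)
        - pd3 1 (fun z => v s z 0) (emb p) := rfl
    rw [hfun, deriv_fun_sub (hDtD' 1 0).differentiableAt (hDtD' 0 1).differentiableAt]
  -- ## the remaining bridging facts for the algebraic core
  have hU0 : orthPart h (v t) (emb p) 0
      = v t (emb p) 0 - swirl h (v t) (emb p) * p 1 / (h ^ 2 + p 0 ^ 2 + p 1 ^ 2) := by
    simp only [orthPart, xiNormSq, xiVec, Htools.vec3_0, Htools.emb_zero, Htools.emb_one]
  have hU1 : orthPart h (v t) (emb p) 1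
      = v t (emb p) 1 + swirl h (v t) (emb p) * p 0 / (h ^ 2 + p 0 ^ 2 + p 1 ^ 2) := by
    simp only [orthPart, xiNormSq, xiVec, Htools.vec3_1, Htools.emb_zero, Htools.emb_one]
    ring
  -- ## apply the algebraic core lemma
  obtain ⟨K1, K2, K3⟩ := keyAlg (p 0) (p 1) h (v t (emb p) 0) (v t (emb p) 1) (v t (emb p) 2)
    (pd3 0 (fun z => v t z 0) (emb p)) (pd3 0 (fun z => v t z 1) (emb p)) (pd3 0 (fun z => v t z 2) (emb p)) (pd3 1 (fun z => v t z 0) (emb p)) (pd3 1 (fun z => v t z 1) (emb p)) (pd3 1 (fun z => v t z 2) (emb p)) (pd3 2 (fun z => v t z 0) (emb p)) (pd3 2 (fun z => v t z 1) (emb p)) (pd3 2 (fun z => v t z 2) (emb p))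
    (fderiv ℝ (fderiv ℝ (fun z => v t z 0)) (emb p) (Pi.single 0 1) (Pi.single 0 1)) (fderiv ℝ (fderiv ℝ (fun z => v t z 1)) (emb p) (Pi.single 0 1) (Pi.single 0 1)) (fderiv ℝ (fderiv ℝ (fun z => v t z 2)) (emb p) (Pi.single 0 1) (Pi.single 0 1)) (fderiv ℝ (fderiv ℝ (fun z => v t z 0)) (emb p) (Pi.single 0 1) (Pi.single 1 1)) (fderiv ℝ (fderiv ℝ (fun z => v t z 1)) (emb p) (Pi.single 0 1) (Pi.single 1 1)) (fderiv ℝ (fderiv ℝ (fun z => v t z 2)) (emb p) (Pi.single 0 1) (Pi.single 1 1)) (fderiv ℝ (fderiv ℝ (fun z => v t z 0)) (emb p) (Pi.single 1 1) (Pi.single 1 1)) (fderiv ℝ (fderiv ℝ (fun z => v t z 1)) (emb p) (Pi.single 1 1) (Pi.single 1 1)) (fderiv ℝ (fderiv ℝ (fun z => v t z 2)) (emb p) (Pi.single 1 1) (Pi.single 1 1))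
    (fderiv ℝ (fderiv ℝ (fun z => v t z 0)) (emb p) (Pi.single 0 1) (Pi.single 2 1)) (fderiv ℝ (fderiv ℝ (fun z => v t z 1)) (emb p) (Pi.single 0 1) (Pi.single 2 1)) (fderiv ℝ (fderiv ℝ (fun z => v t z 2)) (emb p) (Pi.single 0 1) (Pi.single 2 1)) (fderiv ℝ (fderiv ℝ (fun z => v t z 0)) (emb p) (Pi.single 1 1) (Pi.single 2 1)) (fderiv ℝ (fderiv ℝ (fun z => v t z 1)) (emb p) (Pi.single 1 1) (Pi.single 2 1)) (fderiv ℝ (fderiv ℝ (fun z => v t z 2)) (emb p) (Pi.single 1 1) (Pi.single 2 1))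
    (pd3 0 (P t) (emb p)) (pd3 1 (P t) (emb p)) (pd3 2 (P t) (emb p)) (deriv (fun s => v s (emb p) 0) t) (deriv (fun s => v s (emb p) 1) t) (deriv (fun s => v s (emb p) 2) t) (deriv (fun s => pd3 0 (fun z => v s z 1) (emb p)) t) (deriv (fun s => pd3 1 (fun z => v s z 0) (emb p)) t)
    (swirl h (v t) (emb p)) (h ^ 2 + p 0 ^ 2 + p 1 ^ 2)
    (orthPart h (v t) (emb p) 0) (orthPart h (v t) (emb p) 1)
    (pd2 0 (φ t) p) (pd2 1 (φ t) p)
    (pd2 0 (fun q => swirl h (v t) (emb q)) p) (pd2 1 (fun q => swirl h (v t) (emb q)) p)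
    (pd2 0 (fun q : V2 => (q 0 * pd2 0 (φ t) q + q 1 * pd2 1 (φ t) q)
      / (h ^ 2 + q 0 ^ 2 + q 1 ^ 2)) p)
    (pd2 1 (fun q : V2 => (q 0 * pd2 0 (φ t) q + q 1 * pd2 1 (φ t) q)
      / (h ^ 2 + q 0 ^ 2 + q 1 ^ 2)) p)
    (pd2 0 (fun q => w3 (v t) (emb q)) p) (pd2 1 (fun q => w3 (v t) (emb q)) p)
    hh0 hSval rfl hU0 hU1 (hsolve p hp).1 (hsolve p hp).2 hs0 hs1 ht0 ht1 hr0 hr1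
    hR3_0 hR3_1 hR3_2 hR4_00 hR4_01 hR4_02 hR4_10 hR4_11 hR4_12 hR5
    hR1_0 hR1_1 hR1_2 hR2 hR2'0 hR2'1 hR6
  refine ⟨?_, ?_, ?_⟩
  · rw [hderS]
    linarith [K1]
  · rw [hderW]
    linarith [K2]
  · have hw : w3 (v t) (emb p) = pd3 0 (fun z => v t z 1) (emb p) - pd3 1 (fun z => v t z 0) (emb p) := rfl
    rw [hLKval, hw]
    linarith [K3]
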